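/- arXiv:cs/0505086 — 3 statements merged into one kernel-verified Lean document; each statement's English description precedes it below -/
import Mathlib

section
/- Let T₁ and T₂ be 𝒜-trees with 𝒜(T₁) = 𝒜(T₂). Then the following assertions are equivalent: (i) T₁ and T₂ are ancestrally compatible; (ii) T₁ and T₂ are locally compatible; (iii) for every A ∈ 𝒜(T₁) = 𝒜(T₂), the smallest member of 𝒞_𝒜(T₁) containing A equals the smallest member of 𝒞_𝒜(T₂) containing A, and for every X ∈ 𝒞_𝒜(T₁) and Y ∈ 𝒞_𝒜(T₂), if X ∩ Y ≠ ∅ then X ⊆ Y or Y ⊆ X. -/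
/-!
Common framework: rooted labeled trees ("𝒜-trees") following Llabrés–Rocha–Rosselló–Valiente.

A `PreTree α V` is the raw data of a directed graph on (a finite subset of) `V` together with
a partial labeling of its nodes by labels in `α`.  The predicate `PreTree.IsATree` asserts that
this data is a finite rooted tree (the root reaches every node by a unique directed path),
that the labeling is injective, and that every leaf is labeled.
-/

structure PreTree (α : Type) (V : Type) where
  nodes : Set V
  arc : V → V → Prop
  label : V → Option α

namespace PreTree

variable {α V W : Type}

/-- There is a directed path from `u` to `v` (possibly trivial). -/
def path (T : PreTree α V) (u v : V) : Prop := Relation.ReflTransGen T.arc u v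

/-- There is a non-trivial directed path (length ≥ 1) from `u` to `v`. -/
def pathNT (T : PreTree α V) (u v : V) : Prop := Relation.TransGen T.arc u v

/-- `𝒜(T)`: the set of labels of all nodes of `T`. -/
def labelSet (T : PreTree α V) : Set α := {a | ∃ v, T.label v = some a}

/-- `𝒜_T(v)`: the cluster of `v`, i.e. the set of labels of all descendants of `v`
(including `v` itself). -/
def cluster (T : PreTree α V) (v : V) : Set α := {a | ∃ w, T.path v w ∧ T.label w = some a}

/-- `𝒞_𝒜(T)`: the cluster representation of `T`. -/
def clusterRep (T : PreTree α V) : Set (Set α) := {C | ∃ v ∈ T.nodes, T.cluster v = C}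

/-- A leaf is a node without children. -/
def IsLeaf (T : PreTree α V) (v : V) : Prop := v ∈ T.nodes ∧ ∀ w, ¬ T.arc v w

/-- `ℒ(T)`: the set of labels of the leaves of `T`. -/
def leafLabels (T : PreTree α V) : Set α := {a | ∃ v, T.IsLeaf v ∧ T.label v = some a}

/-- A node is elementary when it has exactly one child. -/
def IsElementary (T : PreTree α V) (v : V) : Prop := ∃! w, T.arc v w

/-- `T` is an 𝒜-tree: a finite rooted tree (every node reachable from the root by a unique
directed path, which is captured by unique parents, acyclicity and reachability from a root)
with an injective partial labeling such that every leaf is labeled. -/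
structure IsATree (T : PreTree α V) : Prop where
  finite_nodes : T.nodes.Finite
  arc_mem_left : ∀ {u v : V}, T.arc u v → u ∈ T.nodes
  arc_mem_right : ∀ {u v : V}, T.arc u v → v ∈ T.nodes
  parent_unique : ∀ {u v w : V}, T.arc u w → T.arc v w → u = v
  acyclic : ∀ {u v : V}, T.arc u v → ¬ T.path v u
  rooted : T.nodes.Nonempty → ∃ r ∈ T.nodes, ∀ v ∈ T.nodes, T.path r v
  label_mem : ∀ {v : V} {a : α}, T.label v = some a → v ∈ T.nodes
  label_inj : ∀ {u v : V} {a : α}, T.label u = some a → T.label v = some a → u = v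
  leaf_labeled : ∀ v ∈ T.nodes, (∀ w, ¬ T.arc v w) → ∃ a, T.label v = some a

/-- A semi-labeled tree over `𝒜` is an 𝒜-tree all of whose elementary nodes are labeled. -/
def IsSemiLabeled (T : PreTree α V) : Prop :=
  T.IsATree ∧ ∀ v ∈ T.nodes, T.IsElementary v → ∃ a, T.label v = some a

open Classical in
/-- The restriction `T|X`: the subtree of `T` induced on the nodes whose cluster meets `X`,
keeping exactly the labels that belong to `X`. -/
noncomputable def restrict (T : PreTree α V) (X : Set α) : PreTree α V where
  nodes := {v | v ∈ T.nodes ∧ (T.cluster v ∩ X).Nonempty}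
  arc u v := T.arc u v ∧ (T.cluster u ∩ X).Nonempty ∧ (T.cluster v ∩ X).Nonempty
  label v := if (∃ a ∈ X, T.label v = some a) then T.label v else none

/-- A weak topological embedding `f : S → T`: an injective map on nodes which preserves labels
and preserves and reflects directed paths. -/
def IsWTE (S : PreTree α V) (T : PreTree α W) (f : V → W) : Prop :=
  (∀ v ∈ S.nodes, f v ∈ T.nodes) ∧
  (∀ u ∈ S.nodes, ∀ v ∈ S.nodes, f u = f v → u = v) ∧
  (∀ (v : V) (a : α), S.label v = some a → T.label (f v) = some a) ∧
  (∀ u ∈ S.nodes, ∀ v ∈ S.nodes, (S.path u v ↔ T.path (f u) (f v)))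

/-- Two 𝒜-trees are ancestrally compatible when they admit weak topological embeddings into
a same 𝒜-tree. -/
def AncCompat (T₁ : PreTree α V) (T₂ : PreTree α W) : Prop :=
  ∃ (U : Type) (T : PreTree α U), T.IsATree ∧ (∃ f, IsWTE T₁ T f) ∧ (∃ g, IsWTE T₂ T g)

/-- `m` is the most recent common ancestor of `x` and `y` in `T`. -/
def IsMRCA (T : PreTree α V) (x y m : V) : Prop :=
  T.path m x ∧ T.path m y ∧ ∀ n, T.path n x → T.path n y → T.path n m

/-- Local compatibility: condition (C1) on pairs of common labels and condition (C2)
on triples of common labels. -/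
def LocallyCompatible (T₁ : PreTree α V) (T₂ : PreTree α W) : Prop :=
  (∀ (a b : α) (x₁ y₁ : V) (x₂ y₂ : W),
      T₁.label x₁ = some a → T₁.label y₁ = some b →
      T₂.label x₂ = some a → T₂.label y₂ = some b →
      (T₁.path x₁ y₁ ↔ T₂.path x₂ y₂)) ∧
  (∀ (a b c : α) (va₁ vb₁ vc₁ m₁ m₁' : V) (va₂ vb₂ vc₂ m₂ m₂' : W),
      T₁.label va₁ = some a → T₁.label vb₁ = some b → T₁.label vc₁ = some c →
      T₂.label va₂ = some a → T₂.label vb₂ = some b → T₂.label vc₂ = some c →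
      IsMRCA T₁ vb₁ vc₁ m₁ → IsMRCA T₁ va₁ vb₁ m₁' →
      IsMRCA T₂ va₂ vb₂ m₂ → IsMRCA T₂ vb₂ vc₂ m₂' →
      T₁.pathNT m₁ m₁' → ¬ T₂.pathNT m₂ m₂')

/-- `T` ancestrally displays `S`. -/
def Displays (T : PreTree α W) (S : PreTree α V) : Prop :=
  S.labelSet ⊆ T.labelSet ∧
  (∀ (a b : α) (x y : V) (x' y' : W),
      S.label x = some a → S.label y = some b →
      T.label x' = some a → T.label y' = some b →
      (S.path x y ↔ T.path x' y')) ∧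
  S.clusterRep ⊆ (T.restrict S.labelSet).clusterRep

/-- An unlabeled elementary node. -/
def ElemUnlab (T : PreTree α V) (v : V) : Prop := T.label v = none ∧ T.IsElementary v

/-- The semi-labeled tree obtained from `S` by removing its unlabeled elementary nodes and
replacing by single arcs the maximal paths all of whose intermediate nodes are unlabeled
and elementary. -/
def contract (S : PreTree α V) : PreTree α V where
  nodes := {v | v ∈ S.nodes ∧ ¬ ElemUnlab S v}
  arc u v := (u ∈ S.nodes ∧ ¬ ElemUnlab S u) ∧ (v ∈ S.nodes ∧ ¬ ElemUnlab S v) ∧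
    ∃ l : List V, List.Chain' S.arc (u :: (l ++ [v])) ∧ ∀ m ∈ l, ElemUnlab S m
  label := S.label

/-- `X` is the smallest member of the family `R` containing the label `a`. -/
def SmallestContaining (R : Set (Set α)) (a : α) (X : Set α) : Prop :=
  X ∈ R ∧ a ∈ X ∧ ∀ Y ∈ R, a ∈ Y → X ⊆ Y

/-- `m_{ℓ,Y}`: the number of nodes of `T` whose cluster is `Y`. -/
noncomputable def mcount (T : PreTree α V) (Y : Set α) : ℕ :=
  {v | v ∈ T.nodes ∧ T.cluster v = Y}.ncard

/-- `𝒞 = 𝒞_𝒜(T₁) ∪ 𝒞_𝒜(T₂)`. -/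
def joinC (T₁ : PreTree α V) (T₂ : PreTree α W) : Set (Set α) :=
  T₁.clusterRep ∪ T₂.clusterRep

/-- `n_Y = max (m_{1,Y}, m_{2,Y})`. -/
noncomputable def joinN (T₁ : PreTree α V) (T₂ : PreTree α W) (Y : Set α) : ℕ :=
  max (mcount T₁ Y) (mcount T₂ Y)

open Classical in
/-- The join `T_{1,2}` of two 𝒜-trees with the same label set: nodes are the pairs
`w_{Y,j} = (Y, j)` with `Y ∈ 𝒞` and `1 ≤ j ≤ n_Y`, with the chain arcs `(w_{Y,j}, w_{Y,j-1})`
and the arcs `(w_{Y,1}, w_{Z,n_Z})` for `Z ⊊ Y` maximal in `𝒞`, and `w_{Y,1}` labeled `A`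
exactly when `Y = (⋃ {Z ∈ 𝒞 ∣ Z ⊊ Y}) ⊔ {A}`. -/
noncomputable def join (T₁ : PreTree α V) (T₂ : PreTree α W) : PreTree α (Set α × ℕ) where
  nodes := {p | p.1 ∈ joinC T₁ T₂ ∧ 1 ≤ p.2 ∧ p.2 ≤ joinN T₁ T₂ p.1}
  arc p q := p.1 ∈ joinC T₁ T₂ ∧ q.1 ∈ joinC T₁ T₂ ∧
    ((q.1 = p.1 ∧ p.2 = q.2 + 1 ∧ 1 ≤ q.2 ∧ p.2 ≤ joinN T₁ T₂ p.1) ∨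
     (p.2 = 1 ∧ q.1 ⊂ p.1 ∧ q.2 = joinN T₁ T₂ q.1 ∧ 1 ≤ q.2 ∧
       ¬ ∃ Z ∈ joinC T₁ T₂, q.1 ⊂ Z ∧ Z ⊂ p.1))
  label p :=
    if h : p.2 = 1 ∧ p.1 ∈ joinC T₁ T₂ ∧
        ∃ a : α, a ∉ ⋃₀ {Z ∈ joinC T₁ T₂ | Z ⊂ p.1} ∧
          p.1 = (⋃₀ {Z ∈ joinC T₁ T₂ | Z ⊂ p.1}) ∪ {a}
    then some h.2.2.choose else none

/-- The canonical map `f_ℓ : V(T_ℓ) → V(T_{1,2})`, sending the `i`-th node (from the bottom)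
of the chain of nodes of `T` with cluster `Y` to `w_{Y,i}`. -/
noncomputable def joinMap (T : PreTree α V) (v : V) : Set α × ℕ :=
  (T.cluster v, {u | u ∈ T.nodes ∧ T.cluster u = T.cluster v ∧ T.pathNT v u}.ncard + 1)

end PreTree
namespace PreTree

variable {α V W : Type}

lemma path_refl (T : PreTree α V) (v : V) : T.path v v := Relation.ReflTransGen.refl

lemma path_trans {T : PreTree α V} {u v w : V} (h : T.path u v) (h' : T.path v w) :
    T.path u w := Relation.ReflTransGen.trans h h'

lemma IsATree.path_antisymm {T : PreTree α V} (hT : T.IsATree) {u v : V}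
    (h : T.path u v) (h' : T.path v u) : u = v := by
  rcases Relation.ReflTransGen.cases_head h with rfl | ⟨w, hw, hwv⟩
  · rfl
  · exact absurd (hwv.trans h') (hT.acyclic hw)

lemma IsATree.not_pathNT_self {T : PreTree α V} (hT : T.IsATree) {u : V}
    (h : T.pathNT u u) : False := by
  rcases (Relation.TransGen.head'_iff.mp h) with ⟨w, hw, hwu⟩
  exact hT.acyclic hw hwu

lemma IsATree.pathNT_of_path_ne {T : PreTree α V} (hT : T.IsATree) {u v : V}
    (h : T.path u v) (hne : u ≠ v) : T.pathNT u v := by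
  rcases Relation.ReflTransGen.cases_head h with rfl | ⟨w, hw, hwv⟩
  · exact absurd rfl hne
  · exact Relation.TransGen.head' hw hwv

lemma pathNT.path {T : PreTree α V} {u v : V} (h : T.pathNT u v) : T.path u v :=
  h.to_reflTransGen

lemma IsATree.pathNT_ne {T : PreTree α V} (hT : T.IsATree) {u v : V}
    (h : T.pathNT u v) : u ≠ v := by
  rintro rfl; exact hT.not_pathNT_self h

lemma IsATree.path_mem {T : PreTree α V} (hT : T.IsATree) {u v : V}
    (hu : u ∈ T.nodes) (h : T.path u v) : v ∈ T.nodes := by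
  rcases Relation.ReflTransGen.cases_tail h with rfl | ⟨w, _, hwv⟩
  · exact hu
  · exact hT.arc_mem_right hwv

/-- Ancestors of a common node are comparable. -/
lemma IsATree.anc_comparable {T : PreTree α V} (hT : T.IsATree) {x y z : V}
    (hx : T.path x z) (hy : T.path y z) : T.path x y ∨ T.path y x := by
  induction hy with
  | refl => exact Or.inl hx
  | @tail z' z hyz' harc ih =>
    rcases Relation.ReflTransGen.cases_tail hx with rfl | ⟨w, hxw, hwz⟩
    · exact Or.inr (hyz'.tail harc)
    · obtain rfl : w = z' := hT.parent_unique hwz harc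
      exact ih hxw

lemma cluster_mono {T : PreTree α V} {u v : V} (h : T.path u v) :
    T.cluster v ⊆ T.cluster u := by
  rintro a ⟨w, hw, hl⟩; exact ⟨w, h.trans hw, hl⟩

lemma mem_cluster_iff {T : PreTree α V} (hT : T.IsATree) {v w : V} {a : α}
    (hw : T.label w = some a) : a ∈ T.cluster v ↔ T.path v w := by
  constructor
  · rintro ⟨x, hx, hl⟩; rwa [hT.label_inj hl hw] at hx
  · exact fun h => ⟨w, h, hw⟩

lemma self_mem_cluster {T : PreTree α V} {v : V} {a : α} (h : T.label v = some a) :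
    a ∈ T.cluster v := ⟨v, Relation.ReflTransGen.refl, h⟩

lemma IsATree.desc_finite {T : PreTree α V} (hT : T.IsATree) (v : V) :
    {w | T.path v w}.Finite := by
  apply (hT.finite_nodes.insert v).subset
  intro w hw
  rcases Relation.ReflTransGen.cases_tail hw with rfl | ⟨x, _, hxw⟩
  · exact Set.mem_insert _ _
  · exact Set.mem_insert_of_mem _ (hT.arc_mem_right hxw)

lemma IsATree.anc_finite {T : PreTree α V} (hT : T.IsATree) (v : V) :
    {w | T.path w v}.Finite := by
  apply (hT.finite_nodes.insert v).subset
  intro w hw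
  rcases Relation.ReflTransGen.cases_head hw with rfl | ⟨x, hwx, _⟩
  · exact Set.mem_insert _ _
  · exact Set.mem_insert_of_mem _ (hT.arc_mem_left hwx)

/-- Every node has a (labeled) leaf below it. -/
lemma IsATree.exists_leaf_below {T : PreTree α V} (hT : T.IsATree) :
    ∀ v ∈ T.nodes, ∃ w, T.path v w ∧ T.IsLeaf w := by
  have main : ∀ n : ℕ, ∀ v ∈ T.nodes, {w | T.path v w}.ncard ≤ n →
      ∃ w, T.path v w ∧ T.IsLeaf w := by
    intro n
    induction n with
    | zero =>
      intro v hv h0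
      exfalso
      have : v ∈ {w | T.path v w} := Relation.ReflTransGen.refl
      have := Set.ncard_pos (hT.desc_finite v) |>.mpr ⟨v, this⟩
      omega
    | succ n ih =>
      intro v hv hc
      by_cases hl : ∀ w, ¬ T.arc v w
      · exact ⟨v, Relation.ReflTransGen.refl, hv, hl⟩
      · push_neg at hl
        obtain ⟨u, hu⟩ := hl
        have hsub : {w | T.path u w} ⊂ {w | T.path v w} := by
          constructor
          · intro w hw; exact (Relation.ReflTransGen.head hu hw)
          · intro hss
            have : v ∈ {w | T.path u w} := hss Relation.ReflTransGen.refl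
            exact hT.acyclic hu this
        have hlt := Set.ncard_lt_ncard hsub (hT.desc_finite v)
        obtain ⟨w, hw1, hw2⟩ := ih u (hT.arc_mem_right hu) (by omega)
        exact ⟨w, Relation.ReflTransGen.head hu hw1, hw2⟩
  exact fun v hv => main _ v hv le_rfl

lemma IsATree.cluster_nonempty {T : PreTree α V} (hT : T.IsATree) {v : V}
    (hv : v ∈ T.nodes) : (T.cluster v).Nonempty := by
  obtain ⟨w, hw, hleaf⟩ := hT.exists_leaf_below v hv
  obtain ⟨a, ha⟩ := hT.leaf_labeled w hleaf.1 hleaf.2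
  exact ⟨a, w, hw, ha⟩

lemma cluster_subset_labelSet (T : PreTree α V) (v : V) :
    T.cluster v ⊆ T.labelSet := by
  rintro a ⟨w, _, hl⟩; exact ⟨w, hl⟩

lemma IsATree.labelSet_finite {T : PreTree α V} (hT : T.IsATree) :
    T.labelSet.Finite := by
  have h : T.labelSet ⊆ ⋃ v ∈ T.nodes, {a | T.label v = some a} := by
    rintro a ⟨v, hv⟩
    exact Set.mem_biUnion (hT.label_mem hv) hv
  refine Set.Finite.subset (Set.Finite.biUnion hT.finite_nodes fun v _ => ?_) h
  apply Set.Subsingleton.finite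
  intro a ha b hb
  have : some a = some b := ha.symm.trans hb
  exact Option.some_inj.mp this

lemma IsATree.cluster_finite {T : PreTree α V} (hT : T.IsATree) (v : V) :
    (T.cluster v).Finite := hT.labelSet_finite.subset (cluster_subset_labelSet T v)

lemma IsATree.clusterRep_finite {T : PreTree α V} (hT : T.IsATree) :
    T.clusterRep.Finite := by
  have h : T.clusterRep ⊆ (fun v => T.cluster v) '' T.nodes := by
    rintro X ⟨v, hv, rfl⟩; exact ⟨v, hv, rfl⟩
  exact Set.Finite.subset (hT.finite_nodes.image _) h

/-- Two clusters of the same tree that meet are nested. -/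
lemma IsATree.clusters_nested {T : PreTree α V} (hT : T.IsATree) {u v : V}
    (h : (T.cluster u ∩ T.cluster v).Nonempty) :
    T.cluster u ⊆ T.cluster v ∨ T.cluster v ⊆ T.cluster u := by
  obtain ⟨a, ⟨x, hux, hxl⟩, hav⟩ := h
  have hva : T.path v x := (mem_cluster_iff hT hxl).mp hav
  rcases hT.anc_comparable hux hva with h' | h'
  · exact Or.inr (cluster_mono h')
  · exact Or.inl (cluster_mono h')

/-- MRCA existence. -/
lemma IsATree.mrca_exists {T : PreTree α V} (hT : T.IsATree) {x y r : V}
    (hrx : T.path r x) (hry : T.path r y) : ∃ m, IsMRCA T x y m := by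
  set CA : Set V := {n | T.path n x ∧ T.path n y} with hCA
  have hfin : CA.Finite := (hT.anc_finite x).subset fun n hn => hn.1
  have hne : CA.Nonempty := ⟨r, hrx, hry⟩
  obtain ⟨m, hm, hmax⟩ := Set.Finite.exists_maximalFor
    (fun n => {w | T.path w n}.ncard) CA hfin hne
  refine ⟨m, hm.1, hm.2, fun n hnx hny => ?_⟩
  rcases hT.anc_comparable hnx hm.1 with h' | h'
  · -- path n m
    exact h'
  · -- path m n : show n = m
    have hsub : {w | T.path w m} ⊆ {w | T.path w n} := fun w hw => hw.trans h'
    by_cases hmn : m = n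
    · exact hmn ▸ Relation.ReflTransGen.refl
    · have hssub : {w | T.path w m} ⊂ {w | T.path w n} := by
        refine ⟨hsub, fun hss => ?_⟩
        have : T.path n m := hss Relation.ReflTransGen.refl
        exact hmn (hT.path_antisymm h' this)
      have hlt := Set.ncard_lt_ncard hssub (hT.anc_finite n)
      have : {w | T.path w n}.ncard ≤ {w | T.path w m}.ncard := hmax ⟨hnx, hny⟩ (le_of_lt hlt)
      omega

/-- The cluster of the node labeled `a` is the smallest cluster containing `a`. -/
lemma IsATree.smallest_cluster {T : PreTree α V} (hT : T.IsATree) {v : V} {a : α}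
    (hv : T.label v = some a) : SmallestContaining T.clusterRep a (T.cluster v) := by
  refine ⟨⟨v, hT.label_mem hv, rfl⟩, self_mem_cluster hv, ?_⟩
  rintro Y ⟨u, hu, rfl⟩ haY
  exact cluster_mono ((mem_cluster_iff hT hv).mp haY)

lemma IsATree.cluster_root {T : PreTree α V} (hT : T.IsATree) {r : V}
    (hr : r ∈ T.nodes) (hroot : ∀ v ∈ T.nodes, T.path r v) :
    T.cluster r = T.labelSet := by
  refine Set.Subset.antisymm (cluster_subset_labelSet T r) ?_
  rintro a ⟨v, hv⟩
  exact ⟨v, hroot v (hT.label_mem hv), hv⟩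

end PreTree
namespace PreTree

variable {α V W : Type}

lemma IsATree.path_mem_rev {T : PreTree α V} (hT : T.IsATree) {u v : V}
    (h : T.path u v) (hv : v ∈ T.nodes) : u ∈ T.nodes := by
  rcases Relation.ReflTransGen.cases_head h with rfl | ⟨w, hw, _⟩
  · exact hv
  · exact hT.arc_mem_left hw

lemma implA {T₁ : PreTree α V} {T₂ : PreTree α W}
    (h₁ : T₁.IsATree) (h₂ : T₂.IsATree)
    (h : AncCompat T₁ T₂) : LocallyCompatible T₁ T₂ := by
  obtain ⟨U, T, hT, ⟨f, hf⟩, ⟨g, hg⟩⟩ := h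
  obtain ⟨hfn, hfi, hfl, hfp⟩ := hf
  obtain ⟨hgn, hgi, hgl, hgp⟩ := hg
  constructor
  · intro a b x₁ y₁ x₂ y₂ hx₁ hy₁ hx₂ hy₂
    have hx : f x₁ = g x₂ := hT.label_inj (hfl _ _ hx₁) (hgl _ _ hx₂)
    have hy : f y₁ = g y₂ := hT.label_inj (hfl _ _ hy₁) (hgl _ _ hy₂)
    rw [hfp _ (h₁.label_mem hx₁) _ (h₁.label_mem hy₁), hx, hy,
      ← hgp _ (h₂.label_mem hx₂) _ (h₂.label_mem hy₂)]
  · intro a b c va₁ vb₁ vc₁ m₁ m₁' va₂ vb₂ vc₂ m₂ m₂'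
      hva₁ hvb₁ hvc₁ hva₂ hvb₂ hvc₂ hm₁ hm₁' hm₂ hm₂' hNT1 hNT2
    -- memberships
    have hva₁m := h₁.label_mem hva₁
    have hvb₁m := h₁.label_mem hvb₁
    have hvc₁m := h₁.label_mem hvc₁
    have hva₂m := h₂.label_mem hva₂
    have hvb₂m := h₂.label_mem hvb₂
    have hvc₂m := h₂.label_mem hvc₂
    have hm₁'m : m₁' ∈ T₁.nodes := h₁.path_mem_rev hm₁'.1 hva₁m
    have hm₂'m : m₂' ∈ T₂.nodes := h₂.path_mem_rev hm₂'.1 hvb₂m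
    -- identified labeled nodes
    have hA : f va₁ = g va₂ := hT.label_inj (hfl _ _ hva₁) (hgl _ _ hva₂)
    have hB : f vb₁ = g vb₂ := hT.label_inj (hfl _ _ hvb₁) (hgl _ _ hvb₂)
    have hC : f vc₁ = g vc₂ := hT.label_inj (hfl _ _ hvc₁) (hgl _ _ hvc₂)
    -- f m₁' is not an ancestor of the c-node
    have hnc : ¬ T.path (f m₁') (f vc₁) := by
      intro hp
      have : T₁.path m₁' vc₁ := (hfp _ hm₁'m _ hvc₁m).mpr hp
      have hpm : T₁.path m₁' m₁ := hm₁.2.2 m₁' hm₁'.2.1 this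
      exact h₁.not_pathNT_self (Relation.TransGen.trans_left hNT1 hpm)
    -- g m₂' is not an ancestor of the a-node
    have hna : ¬ T.path (g m₂') (g va₂) := by
      intro hp
      have : T₂.path m₂' va₂ := (hgp _ hm₂'m _ hva₂m).mpr hp
      have hpm : T₂.path m₂' m₂ := hm₂.2.2 m₂' this hm₂'.1
      exact h₂.not_pathNT_self (Relation.TransGen.trans_left hNT2 hpm)
    -- both are ancestors of the b-node
    have hb1 : T.path (f m₁') (f vb₁) := (hfp _ hm₁'m _ hvb₁m).mp hm₁'.2.1
    have hb2 : T.path (g m₂') (g vb₂) := (hgp _ hm₂'m _ hvb₂m).mp hm₂'.1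
    rw [hB] at hb1
    rcases hT.anc_comparable hb1 hb2 with hcmp | hcmp
    · -- f m₁' ⇝ g m₂' ⇝ c-node
      have : T.path (g m₂') (g vc₂) := (hgp _ hm₂'m _ hvc₂m).mp hm₂'.2.1
      exact hnc (hC ▸ (hcmp.trans this))
    · -- g m₂' ⇝ f m₁' ⇝ a-node
      have : T.path (f m₁') (f va₁) := (hfp _ hm₁'m _ hva₁m).mp hm₁'.1
      exact hna (hA ▸ (hcmp.trans this))

end PreTree
namespace PreTree

variable {α V W : Type}

lemma IsMRCA.symm {T : PreTree α V} {x y m : V} (h : IsMRCA T x y m) :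
    IsMRCA T y x m := ⟨h.2.1, h.1, fun n h1 h2 => h.2.2 n h2 h1⟩

/-- Under (C1), labeled nodes with the same label have the same cluster. -/
lemma cluster_label_eq {T₁ : PreTree α V} {T₂ : PreTree α W}
    (h₁ : T₁.IsATree) (h₂ : T₂.IsATree) (hl : T₁.labelSet = T₂.labelSet)
    (hC1 : ∀ (a b : α) (x₁ y₁ : V) (x₂ y₂ : W),
      T₁.label x₁ = some a → T₁.label y₁ = some b →
      T₂.label x₂ = some a → T₂.label y₂ = some b →
      (T₁.path x₁ y₁ ↔ T₂.path x₂ y₂))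
    {v₁ : V} {v₂ : W} {a : α} (hv₁ : T₁.label v₁ = some a) (hv₂ : T₂.label v₂ = some a) :
    T₁.cluster v₁ = T₂.cluster v₂ := by
  ext b
  constructor
  · rintro ⟨w₁, hp, hw₁⟩
    have hb2 : b ∈ T₂.labelSet := hl ▸ ⟨w₁, hw₁⟩
    obtain ⟨w₂, hw₂⟩ := hb2
    exact ⟨w₂, (hC1 a b v₁ w₁ v₂ w₂ hv₁ hw₁ hv₂ hw₂).mp hp, hw₂⟩
  · rintro ⟨w₂, hp, hw₂⟩
    have hb1 : b ∈ T₁.labelSet := hl.symm ▸ ⟨w₂, hw₂⟩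
    obtain ⟨w₁, hw₁⟩ := hb1
    exact ⟨w₁, (hC1 a b v₁ w₁ v₂ w₂ hv₁ hw₁ hv₂ hw₂).mpr hp, hw₁⟩

lemma implB {T₁ : PreTree α V} {T₂ : PreTree α W}
    (h₁ : T₁.IsATree) (h₂ : T₂.IsATree) (hl : T₁.labelSet = T₂.labelSet)
    (h : LocallyCompatible T₁ T₂) :
    (∀ a ∈ T₁.labelSet, ∃ X : Set α,
        SmallestContaining T₁.clusterRep a X ∧ SmallestContaining T₂.clusterRep a X) ∧
    (∀ X ∈ T₁.clusterRep, ∀ Y ∈ T₂.clusterRep, (X ∩ Y).Nonempty → X ⊆ Y ∨ Y ⊆ X) := by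
  obtain ⟨hC1, hC2⟩ := h
  constructor
  · rintro a ⟨v₁, hv₁⟩
    obtain ⟨v₂, hv₂⟩ : a ∈ T₂.labelSet := hl ▸ ⟨v₁, hv₁⟩
    refine ⟨T₁.cluster v₁, h₁.smallest_cluster hv₁, ?_⟩
    rw [cluster_label_eq h₁ h₂ hl hC1 hv₁ hv₂]
    exact h₂.smallest_cluster hv₂
  · rintro X ⟨u, hu, rfl⟩ Y ⟨w, hw, rfl⟩ ⟨c, hcX, hcY⟩
    by_contra hcon
    push_neg at hcon
    obtain ⟨hns1, hns2⟩ := hcon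
    rw [Set.not_subset] at hns1 hns2
    obtain ⟨a, haX, haY⟩ := hns1
    obtain ⟨b, hbY, hbX⟩ := hns2
    -- labeled nodes in both trees
    obtain ⟨va₁, hpa₁, hva₁⟩ := haX
    obtain ⟨va₂, hva₂⟩ : a ∈ T₂.labelSet := hl ▸ ⟨va₁, hva₁⟩
    obtain ⟨vb₂, hpb₂, hvb₂⟩ := hbY
    obtain ⟨vb₁, hvb₁⟩ : b ∈ T₁.labelSet := hl.symm ▸ ⟨vb₂, hvb₂⟩
    obtain ⟨vc₁, hpc₁, hvc₁⟩ := hcX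
    obtain ⟨vc₂, hpc₂, hvc₂⟩ := hcY
    -- roots
    obtain ⟨r₁, hr₁, hroot₁⟩ := h₁.rooted ⟨u, hu⟩
    obtain ⟨r₂, hr₂, hroot₂⟩ := h₂.rooted ⟨w, hw⟩
    -- MRCAs in T₁
    obtain ⟨mac₁, hmac₁⟩ := h₁.mrca_exists hpa₁ hpc₁
    obtain ⟨mbc₁, hmbc₁⟩ := h₁.mrca_exists (hroot₁ _ (h₁.label_mem hvb₁))
      (hroot₁ _ (h₁.label_mem hvc₁))
    -- b is not below mac₁
    have hnb : ¬ T₁.path mac₁ vb₁ := by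
      intro hp
      have hum : T₁.path u mac₁ := hmac₁.2.2 u hpa₁ hpc₁
      exact hbX ⟨vb₁, hum.trans hp, hvb₁⟩
    have hNT1 : T₁.pathNT mbc₁ mac₁ := by
      rcases h₁.anc_comparable hmac₁.2.1 hmbc₁.2.1 with hcmp | hcmp
      · exact absurd (hcmp.trans hmbc₁.1) hnb
      · refine h₁.pathNT_of_path_ne hcmp ?_
        rintro rfl; exact hnb hmbc₁.1
    -- MRCAs in T₂
    obtain ⟨mbc₂, hmbc₂⟩ := h₂.mrca_exists hpb₂ hpc₂
    obtain ⟨mac₂, hmac₂⟩ := h₂.mrca_exists (hroot₂ _ (h₂.label_mem hva₂))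
      (hroot₂ _ (h₂.label_mem hvc₂))
    have hna : ¬ T₂.path mbc₂ va₂ := fun hp =>
      haY ⟨va₂, (hmbc₂.2.2 w hpb₂ hpc₂).trans hp, hva₂⟩
    have hNT2 : T₂.pathNT mac₂ mbc₂ := by
      rcases h₂.anc_comparable hmbc₂.2.1 hmac₂.2.1 with hcmp | hcmp
      · exact absurd (hcmp.trans hmac₂.1) hna
      · refine h₂.pathNT_of_path_ne hcmp ?_
        rintro rfl; exact hna hmac₂.1
    exact hC2 a c b va₁ vc₁ vb₁ mbc₁ mac₁ va₂ vc₂ vb₂ mac₂ mbc₂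
      hva₁ hvc₁ hvb₁ hva₂ hvc₂ hvb₂ hmbc₁.symm hmac₁ hmac₂ hmbc₂.symm hNT1 hNT2

end PreTree
namespace PreTree

variable {α V W : Type} {T₁ : PreTree α V} {T₂ : PreTree α W}

lemma memC_finite (h₁ : T₁.IsATree) (h₂ : T₂.IsATree) {Y : Set α}
    (hY : Y ∈ joinC T₁ T₂) : Y.Finite := by
  rcases hY with ⟨v, _, rfl⟩ | ⟨v, _, rfl⟩
  · exact h₁.cluster_finite v
  · exact h₂.cluster_finite v

lemma memC_nonempty (h₁ : T₁.IsATree) (h₂ : T₂.IsATree) {Y : Set α}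
    (hY : Y ∈ joinC T₁ T₂) : Y.Nonempty := by
  rcases hY with ⟨v, hv, rfl⟩ | ⟨v, hv, rfl⟩
  · exact h₁.cluster_nonempty hv
  · exact h₂.cluster_nonempty hv

lemma memC_subset (h₁ : T₁.IsATree) (h₂ : T₂.IsATree) (hl : T₁.labelSet = T₂.labelSet)
    {Y : Set α} (hY : Y ∈ joinC T₁ T₂) : Y ⊆ T₁.labelSet := by
  rcases hY with ⟨v, _, rfl⟩ | ⟨v, _, rfl⟩
  · exact cluster_subset_labelSet T₁ v
  · exact hl ▸ cluster_subset_labelSet T₂ v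

lemma joinC_finite (h₁ : T₁.IsATree) (h₂ : T₂.IsATree) : (joinC T₁ T₂).Finite :=
  h₁.clusterRep_finite.union h₂.clusterRep_finite

lemma mcount_pos {T : PreTree α V} (hT : T.IsATree) {Y : Set α}
    (hY : Y ∈ T.clusterRep) : 1 ≤ mcount T Y := by
  obtain ⟨v, hv, rfl⟩ := hY
  have hfin : {u | u ∈ T.nodes ∧ T.cluster u = T.cluster v}.Finite :=
    hT.finite_nodes.subset fun u hu => hu.1
  exact Set.ncard_pos hfin |>.mpr ⟨v, hv, rfl⟩

lemma joinN_pos (h₁ : T₁.IsATree) (h₂ : T₂.IsATree) {Y : Set α}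
    (hY : Y ∈ joinC T₁ T₂) : 1 ≤ joinN T₁ T₂ Y := by
  rcases hY with hY | hY
  · exact le_max_of_le_left (mcount_pos h₁ hY)
  · exact le_max_of_le_right (mcount_pos h₂ hY)

/-- Laminarity of the joint cluster family, given condition (iii). -/
lemma lamC (h₁ : T₁.IsATree) (h₂ : T₂.IsATree)
    (hnest : ∀ X ∈ T₁.clusterRep, ∀ Y ∈ T₂.clusterRep, (X ∩ Y).Nonempty → X ⊆ Y ∨ Y ⊆ X)
    {X Y : Set α} (hX : X ∈ joinC T₁ T₂) (hY : Y ∈ joinC T₁ T₂)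
    (hmeet : (X ∩ Y).Nonempty) : X ⊆ Y ∨ Y ⊆ X := by
  rcases hX with hX | hX <;> rcases hY with hY | hY
  · obtain ⟨u, hu, rfl⟩ := hX; obtain ⟨v, hv, rfl⟩ := hY
    exact h₁.clusters_nested hmeet
  · exact hnest X hX Y hY hmeet
  · rcases hnest Y hY X hX (by rwa [Set.inter_comm]) with h | h
    · exact Or.inr h
    · exact Or.inl h
  · obtain ⟨u, hu, rfl⟩ := hX; obtain ⟨v, hv, rfl⟩ := hY
    exact h₂.clusters_nested hmeet

/-- Arcs of the join decrease the (cluster, index) data. -/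
lemma join_arc_mono {p q : Set α × ℕ} (h : (join T₁ T₂).arc p q) :
    q.1 ⊆ p.1 ∧ (q.1 = p.1 → q.2 < p.2) := by
  obtain ⟨_, _, h | h⟩ := h
  · exact ⟨h.1 ▸ le_refl _, fun _ => by omega⟩
  · refine ⟨h.2.1.1, fun he => absurd he ?_⟩
    intro he; exact h.2.1.2 (he ▸ le_refl _)

lemma join_path_mono {p q : Set α × ℕ} (h : (join T₁ T₂).path p q) :
    q.1 ⊆ p.1 ∧ (q.1 = p.1 → q.2 ≤ p.2) := by
  induction h with
  | refl => exact ⟨le_refl _, fun _ => le_refl _⟩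
  | @tail r q hpr harc ih =>
    obtain ⟨hs, hi⟩ := join_arc_mono harc
    refine ⟨hs.trans ih.1, fun he => ?_⟩
    have hrp : r.1 = p.1 := Set.Subset.antisymm ih.1 (he ▸ hs)
    have hqr : q.1 = r.1 := hrp ▸ he
    have := hi hqr
    have := ih.2 hrp
    omega

lemma join_chain_path {Y : Set α} (hY : Y ∈ joinC T₁ T₂) :
    ∀ i j : ℕ, 1 ≤ j → j ≤ i → i ≤ joinN T₁ T₂ Y → (join T₁ T₂).path (Y, i) (Y, j) := by
  intro i j h1 hji
  induction i, hji using Nat.le_induction with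
  | base => intro _; exact Relation.ReflTransGen.refl
  | succ i hji ih =>
    intro hin
    refine Relation.ReflTransGen.head ?_ (ih (by omega))
    exact ⟨hY, hY, Or.inl ⟨rfl, rfl, by omega, hin⟩⟩

end PreTree
namespace PreTree

variable {α V W : Type} {T₁ : PreTree α V} {T₂ : PreTree α W}

/-- From `(Y,1)` there is an arc to a maximal strict sub-cluster above a given `Z ⊂ Y`. -/
lemma exists_max_arc (h₁ : T₁.IsATree) (h₂ : T₂.IsATree) {Y Z : Set α}
    (hY : Y ∈ joinC T₁ T₂) (hZ : Z ∈ joinC T₁ T₂) (hZY : Z ⊂ Y) :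
    ∃ M ∈ joinC T₁ T₂, Z ⊆ M ∧ M ⊂ Y ∧ (join T₁ T₂).arc (Y, 1) (M, joinN T₁ T₂ M) := by
  set S : Set (Set α) := {Z' ∈ joinC T₁ T₂ | Z ⊆ Z' ∧ Z' ⊂ Y} with hS
  have hSfin : S.Finite := (joinC_finite h₁ h₂).subset fun Z' hZ' => hZ'.1
  have hSne : S.Nonempty := ⟨Z, hZ, le_refl _, hZY⟩
  obtain ⟨M, hM, hmax⟩ := Set.Finite.exists_maximalFor Set.ncard S hSfin hSne
  refine ⟨M, hM.1, hM.2.1, hM.2.2, hY, hM.1, Or.inr ⟨rfl, hM.2.2, rfl,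
    joinN_pos h₁ h₂ hM.1, ?_⟩⟩
  rintro ⟨Z'', hZ'', hMZ'', hZ''Y⟩
  have hmem : Z'' ∈ S := ⟨hZ'', hM.2.1.trans hMZ''.subset, hZ''Y⟩
  have hlt : M.ncard < Z''.ncard :=
    Set.ncard_lt_ncard hMZ'' (memC_finite h₁ h₂ hZ'')
  have := hmax hmem (le_of_lt hlt)
  omega

/-- Existence of descending paths in the join. -/
lemma join_path_down (h₁ : T₁.IsATree) (h₂ : T₂.IsATree) :
    ∀ k : ℕ, ∀ Y ∈ joinC T₁ T₂, Y.ncard ≤ k → ∀ Z ∈ joinC T₁ T₂, Z ⊆ Y →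
    ∀ i j : ℕ, 1 ≤ i → i ≤ joinN T₁ T₂ Y → 1 ≤ j → j ≤ joinN T₁ T₂ Z →
    (Z = Y → j ≤ i) → (join T₁ T₂).path (Y, i) (Z, j) := by
  intro k
  induction k with
  | zero =>
    intro Y hY hk
    exfalso
    have := Set.ncard_pos (memC_finite h₁ h₂ hY) |>.mpr (memC_nonempty h₁ h₂ hY)
    omega
  | succ k ih =>
    intro Y hY hk Z hZ hZY i j hi1 hin hj1 hjn hij
    by_cases he : Z = Y
    · subst he
      exact join_chain_path hY i j hj1 (hij rfl) hin
    · have hss : Z ⊂ Y := ⟨hZY, fun h => he (Set.Subset.antisymm hZY h)⟩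
      obtain ⟨M, hM, hZM, hMY, harc⟩ := exists_max_arc h₁ h₂ hY hZ hss
      have hp1 : (join T₁ T₂).path (Y, i) (Y, 1) := join_chain_path hY i 1 le_rfl hi1 hin
      have hkM : M.ncard ≤ k := by
        have h1 := Set.ncard_lt_ncard hMY (memC_finite h₁ h₂ hY)
        omega
      have hp2 : (join T₁ T₂).path (M, joinN T₁ T₂ M) (Z, j) :=
        ih M hM hkM Z hZ hZM _ j (joinN_pos h₁ h₂ hM) le_rfl hj1 hjn
          (fun hZM' => hZM' ▸ hjn)
      exact (hp1.tail harc).trans hp2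

lemma join_mem_nodes_iff {p : Set α × ℕ} :
    p ∈ (join T₁ T₂).nodes ↔
      p.1 ∈ joinC T₁ T₂ ∧ 1 ≤ p.2 ∧ p.2 ≤ joinN T₁ T₂ p.1 := Iff.rfl

/-- Full characterization of paths between nodes of the join. -/
lemma join_path_iff (h₁ : T₁.IsATree) (h₂ : T₂.IsATree) {p q : Set α × ℕ}
    (hp : p ∈ (join T₁ T₂).nodes) (hq : q ∈ (join T₁ T₂).nodes) :
    (join T₁ T₂).path p q ↔ (q.1 ⊆ p.1 ∧ (q.1 = p.1 → q.2 ≤ p.2)) := by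
  constructor
  · exact join_path_mono
  · rintro ⟨hs, hi⟩
    obtain ⟨hp1, hp2, hp3⟩ := hp
    obtain ⟨hq1, hq2, hq3⟩ := hq
    have := join_path_down h₁ h₂ p.1.ncard p.1 hp1 le_rfl q.1 hq1 hs p.2 q.2
      hp2 hp3 hq2 hq3 hi
    simpa using this

end PreTree
namespace PreTree

variable {α V W : Type} {T₁ : PreTree α V} {T₂ : PreTree α W}

lemma cluster_leaf {T : PreTree α V} {w : V} {a : α}
    (hw : T.IsLeaf w) (hla : T.label w = some a) : T.cluster w = {a} := by
  ext b
  constructor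
  · rintro ⟨x, hp, hx⟩
    rcases Relation.ReflTransGen.cases_head hp with rfl | ⟨y, hy, _⟩
    · exact Set.mem_singleton_iff.mpr (Option.some_inj.mp (hx.symm.trans hla))
    · exact absurd hy (hw.2 y)
  · rintro rfl
    exact ⟨w, Relation.ReflTransGen.refl, hla⟩

lemma singleton_below {T : PreTree α V} (hT : T.IsATree) {v : V} (hv : v ∈ T.nodes) :
    ∃ a ∈ T.cluster v, {a} ∈ T.clusterRep := by
  obtain ⟨w, hp, hleaf⟩ := hT.exists_leaf_below v hv
  obtain ⟨a, ha⟩ := hT.leaf_labeled w hleaf.1 hleaf.2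
  exact ⟨a, ⟨w, hp, ha⟩, ⟨w, hleaf.1, cluster_leaf hleaf ha⟩⟩

lemma join_label_eq {p : Set α × ℕ} {a : α} (hp2 : p.2 = 1) (hp1 : p.1 ∈ joinC T₁ T₂)
    (ha1 : a ∉ ⋃₀ {Z ∈ joinC T₁ T₂ | Z ⊂ p.1})
    (ha2 : p.1 = ⋃₀ {Z ∈ joinC T₁ T₂ | Z ⊂ p.1} ∪ {a}) :
    (join T₁ T₂).label p = some a := by
  have hcond : p.2 = 1 ∧ p.1 ∈ joinC T₁ T₂ ∧
      ∃ a' : α, a' ∉ ⋃₀ {Z ∈ joinC T₁ T₂ | Z ⊂ p.1} ∧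
        p.1 = (⋃₀ {Z ∈ joinC T₁ T₂ | Z ⊂ p.1}) ∪ {a'} := ⟨hp2, hp1, a, ha1, ha2⟩
  show (join T₁ T₂).label p = some a
  simp only [join]
  rw [dif_pos hcond]
  have hspec := hcond.2.2.choose_spec
  have haP : a ∈ p.1 := ha2 ▸ Or.inr rfl
  rw [hspec.2] at haP
  rcases haP with h | h
  · exact absurd h ha1
  · exact congrArg some (Set.eq_of_mem_singleton h).symm

lemma join_label_cases {p : Set α × ℕ} {a : α} (h : (join T₁ T₂).label p = some a) :
    p.2 = 1 ∧ p.1 ∈ joinC T₁ T₂ ∧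
      a ∉ ⋃₀ {Z ∈ joinC T₁ T₂ | Z ⊂ p.1} ∧
      p.1 = (⋃₀ {Z ∈ joinC T₁ T₂ | Z ⊂ p.1}) ∪ {a} := by
  by_cases hcond : p.2 = 1 ∧ p.1 ∈ joinC T₁ T₂ ∧
      ∃ a' : α, a' ∉ ⋃₀ {Z ∈ joinC T₁ T₂ | Z ⊂ p.1} ∧
        p.1 = (⋃₀ {Z ∈ joinC T₁ T₂ | Z ⊂ p.1}) ∪ {a'}
  · have h' : (join T₁ T₂).label p = some hcond.2.2.choose := dif_pos hcond
    have : a = hcond.2.2.choose := Option.some_inj.mp (h.symm.trans h')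
    obtain ⟨hs1, hs2⟩ := hcond.2.2.choose_spec
    exact ⟨hcond.1, hcond.2.1, this ▸ hs1, this ▸ hs2⟩
  · have h' : (join T₁ T₂).label p = none := dif_neg hcond
    rw [h'] at h; exact absurd h (by simp)

lemma join_isATree (h₁ : T₁.IsATree) (h₂ : T₂.IsATree) (hl : T₁.labelSet = T₂.labelSet)
    (hnest : ∀ X ∈ T₁.clusterRep, ∀ Y ∈ T₂.clusterRep, (X ∩ Y).Nonempty → X ⊆ Y ∨ Y ⊆ X) :
    (join T₁ T₂).IsATree := by
  constructor
  case finite_nodes =>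
    have : (join T₁ T₂).nodes ⊆
        ⋃ Y ∈ joinC T₁ T₂, (fun j => (Y, j)) '' Set.Icc 1 (joinN T₁ T₂ Y) := by
      rintro p ⟨hp1, hp2, hp3⟩
      exact Set.mem_biUnion hp1 ⟨p.2, ⟨hp2, hp3⟩, rfl⟩
    exact Set.Finite.subset
      (Set.Finite.biUnion (joinC_finite h₁ h₂) fun Y _ => (Set.finite_Icc _ _).image _) this
  case arc_mem_left =>
    rintro p q ⟨hpC, hqC, h | h⟩
    · exact ⟨hpC, by omega, h.2.2.2⟩
    · exact ⟨hpC, h.1 ▸ le_rfl, h.1 ▸ joinN_pos h₁ h₂ hpC⟩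
  case arc_mem_right =>
    rintro p q ⟨hpC, hqC, h | h⟩
    · refine ⟨hqC, h.2.2.1, ?_⟩
      have := h.2.2.2; rw [← h.1] at this; omega
    · exact ⟨hqC, h.2.2.2.1, le_of_eq h.2.2.1⟩
  case parent_unique =>
    rintro u v w ⟨huC, hwC, hu⟩ ⟨hvC, _, hv⟩
    rcases hu with hu | hu <;> rcases hv with hv | hv
    · refine Prod.ext (hu.1.symm.trans hv.1) ?_
      have := hu.2.1; have := hv.2.1; omega
    · exfalso
      have h1 := hu.2.2.2; rw [← hu.1] at h1
      have h2 := hv.2.2.2.1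
      omega
    · exfalso
      have h1 := hv.2.2.2; rw [← hv.1] at h1
      have h2 := hu.2.2.2.1
      omega
    · obtain ⟨a, ha⟩ := memC_nonempty h₁ h₂ hwC
      have h11 : u.1 = v.1 := by
        rcases lamC h₁ h₂ hnest huC hvC ⟨a, hu.2.1.1 ha, hv.2.1.1 ha⟩ with hs | hs
        · by_contra hne
          exact hv.2.2.2.2 ⟨u.1, huC, hu.2.1, ⟨hs, fun h => hne (Set.Subset.antisymm hs h)⟩⟩
        · by_contra hne
          exact hu.2.2.2.2 ⟨v.1, hvC, hv.2.1, ⟨hs, fun h => hne (Set.Subset.antisymm h hs)⟩⟩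
      exact Prod.ext h11 (hu.1.trans hv.1.symm)
  case acyclic =>
    intro p q harc hpath
    obtain ⟨hs1, hi1⟩ := join_arc_mono harc
    obtain ⟨hs2, hi2⟩ := join_path_mono hpath
    have he : q.1 = p.1 := Set.Subset.antisymm hs1 hs2
    have := hi1 he
    have := hi2 he.symm
    omega
  case rooted =>
    rintro ⟨p, hp1, _, _⟩
    have hT₁ne : T₁.nodes.Nonempty := by
      rcases hp1 with ⟨v, hv, _⟩ | ⟨v, hv, _⟩
      · exact ⟨v, hv⟩
      · obtain ⟨a, ha, _⟩ := singleton_below h₂ hv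
        have : a ∈ T₁.labelSet := hl ▸ cluster_subset_labelSet T₂ v ha
        obtain ⟨u, hu⟩ := this
        exact ⟨u, h₁.label_mem hu⟩
    obtain ⟨r, hr, hroot⟩ := h₁.rooted hT₁ne
    have hA : T₁.cluster r = T₁.labelSet := h₁.cluster_root hr hroot
    have hAC : T₁.cluster r ∈ joinC T₁ T₂ := Or.inl ⟨r, hr, rfl⟩
    refine ⟨(T₁.cluster r, joinN T₁ T₂ (T₁.cluster r)),
      ⟨hAC, joinN_pos h₁ h₂ hAC, le_rfl⟩, ?_⟩
    intro q hq
    refine (join_path_iff h₁ h₂ ⟨hAC, joinN_pos h₁ h₂ hAC, le_rfl⟩ hq).mpr ?_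
    refine ⟨hA ▸ memC_subset h₁ h₂ hl hq.1, fun he => ?_⟩
    have h' := hq.2.2; rw [he] at h'; simpa using h'
  case label_mem =>
    intro p a h
    obtain ⟨hp2, hp1, _, _⟩ := join_label_cases h
    exact ⟨hp1, by omega, hp2 ▸ joinN_pos h₁ h₂ hp1⟩
  case label_inj =>
    intro u v a hu hv
    obtain ⟨hu2, hu1, hua1, hua2⟩ := join_label_cases hu
    obtain ⟨hv2, hv1, hva1, hva2⟩ := join_label_cases hv
    have hau : a ∈ u.1 := hua2 ▸ Or.inr rfl
    have hav : a ∈ v.1 := hva2 ▸ Or.inr rfl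
    have h11 : u.1 = v.1 := by
      by_contra hne
      rcases lamC h₁ h₂ hnest hu1 hv1 ⟨a, hau, hav⟩ with hs | hs
      · exact hva1 ⟨u.1, ⟨hu1, hs, fun h => hne (Set.Subset.antisymm hs h)⟩, hau⟩
      · exact hua1 ⟨v.1, ⟨hv1, hs, fun h => hne (Set.Subset.antisymm h hs)⟩, hav⟩
    exact Prod.ext h11 (by omega)
  case leaf_labeled =>
    rintro v ⟨hv1, hv2, hv3⟩ hno
    have hv2' : v.2 = 1 := by
      by_contra hne
      exact hno (v.1, v.2 - 1) ⟨hv1, hv1, Or.inl ⟨rfl, by omega, by omega, hv3⟩⟩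
    have hnoZ : ¬ ∃ Z ∈ joinC T₁ T₂, Z ⊂ v.1 := by
      rintro ⟨Z, hZ, hZv⟩
      obtain ⟨M, hM, _, _, harc⟩ := exists_max_arc h₁ h₂ hv1 hZ hZv
      have hveq : v = (v.1, 1) := Prod.ext rfl hv2'
      exact hno (M, joinN T₁ T₂ M) (hveq ▸ harc)
    have hsing : ∃ a, v.1 = {a} := by
      have : ∃ a ∈ v.1, {a} ∈ joinC T₁ T₂ := by
        rcases hv1 with ⟨u, hu, he⟩ | ⟨u, hu, he⟩
        · obtain ⟨a, ha, hs⟩ := singleton_below h₁ hu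
          exact ⟨a, he ▸ ha, Or.inl hs⟩
        · obtain ⟨a, ha, hs⟩ := singleton_below h₂ hu
          exact ⟨a, he ▸ ha, Or.inr hs⟩
      obtain ⟨a, ha, hs⟩ := this
      refine ⟨a, ?_⟩
      by_contra hne
      exact hnoZ ⟨{a}, hs, Set.singleton_subset_iff.mpr ha,
        fun h => hne (Set.Subset.antisymm h (Set.singleton_subset_iff.mpr ha))⟩
    obtain ⟨a, ha⟩ := hsing
    have hempty : {Z ∈ joinC T₁ T₂ | Z ⊂ v.1} = ∅ := by
      ext Z; simp only [Set.mem_setOf_eq, Set.mem_empty_iff_false, iff_false]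
      rintro ⟨hZ, hZv⟩; exact hnoZ ⟨Z, hZ, hZv⟩
    refine ⟨a, join_label_eq hv2' hv1 ?_ ?_⟩
    · rw [hempty]; simp
    · rw [hempty, ha]; simp

end PreTree
namespace PreTree

variable {α V W : Type} {T₁ : PreTree α V} {T₂ : PreTree α W}

lemma joinMap_WTE {V' : Type} {T : PreTree α V'} (h₁ : T₁.IsATree) (h₂ : T₂.IsATree)
    (hT : T.IsATree)
    (hC : T.clusterRep ⊆ joinC T₁ T₂)
    (hn : ∀ Y, mcount T Y ≤ joinN T₁ T₂ Y)
    (hlabmin : ∀ (v : V') (a : α), T.label v = some a →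
      ∀ Z ∈ joinC T₁ T₂, a ∈ Z → T.cluster v ⊆ Z) :
    IsWTE T (join T₁ T₂) (joinMap T) := by
  set D : V' → Set V' :=
    fun v => {u | u ∈ T.nodes ∧ T.cluster u = T.cluster v ∧ T.pathNT v u} with hD
  have hDfin : ∀ v, (D v).Finite := fun v => hT.finite_nodes.subset fun u hu => hu.1
  have hvD : ∀ v, v ∉ D v := fun v hv => hT.not_pathNT_self hv.2.2
  have hidx : ∀ v ∈ T.nodes, (D v).ncard + 1 ≤ mcount T (T.cluster v) := by
    intro v hv
    have hEfin : {u | u ∈ T.nodes ∧ T.cluster u = T.cluster v}.Finite :=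
      hT.finite_nodes.subset fun u hu => hu.1
    have hsub : insert v (D v) ⊆ {u | u ∈ T.nodes ∧ T.cluster u = T.cluster v} := by
      rintro u (rfl | hu)
      · exact ⟨hv, rfl⟩
      · exact ⟨hu.1, hu.2.1⟩
    have := Set.ncard_le_ncard hsub hEfin
    rwa [Set.ncard_insert_of_notMem (hvD v) (hDfin v)] at this
  have hmem : ∀ v ∈ T.nodes, joinMap T v ∈ (join T₁ T₂).nodes := by
    intro v hv
    refine ⟨hC ⟨v, hv, rfl⟩, ?_, ?_⟩
    · show 1 ≤ (D v).ncard + 1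
      omega
    · show (D v).ncard + 1 ≤ joinN T₁ T₂ (T.cluster v)
      exact le_trans (hidx v hv) (hn _)
  have hDmono : ∀ u v : V', T.path u v → T.cluster u = T.cluster v → D v ⊆ D u := by
    rintro u v hp he x ⟨hx1, hx2, hx3⟩
    exact ⟨hx1, hx2.trans he.symm, Relation.TransGen.trans_right hp hx3⟩
  have hDstrict : ∀ u v : V', v ∈ T.nodes → T.pathNT u v → T.cluster u = T.cluster v →
      (D v).ncard < (D u).ncard := by
    intro u v hv hp he
    refine Set.ncard_lt_ncard ⟨hDmono u v hp.to_reflTransGen he, fun hss => ?_⟩ (hDfin u)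
    exact hvD v (hss ⟨hv, he.symm, hp⟩)
  have hcomp : ∀ u ∈ T.nodes, ∀ v ∈ T.nodes, (T.cluster u ∩ T.cluster v).Nonempty →
      T.path u v ∨ T.path v u := by
    rintro u hu v hv ⟨a, ⟨w, hw, hwl⟩, hav⟩
    exact hT.anc_comparable hw ((mem_cluster_iff hT hwl).mp hav)
  refine ⟨hmem, ?_, ?_, ?_⟩
  · -- injectivity
    intro u hu v hv heq
    have hce : T.cluster u = T.cluster v := congrArg Prod.fst heq
    have hie : (D u).ncard = (D v).ncard := by
      have h' := congrArg Prod.snd heq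
      change (D u).ncard + 1 = (D v).ncard + 1 at h'
      omega
    by_contra hne
    obtain ⟨a, ha⟩ := hT.cluster_nonempty hu
    rcases hcomp u hu v hv ⟨a, ha, hce ▸ ha⟩ with hp | hp
    · have := hDstrict u v hv (hT.pathNT_of_path_ne hp hne) hce
      omega
    · have := hDstrict v u hu (hT.pathNT_of_path_ne hp (Ne.symm hne)) hce.symm
      omega
  · -- label preservation
    intro v a hv
    have hvn : v ∈ T.nodes := hT.label_mem hv
    have hDe : D v = ∅ := by
      rw [Set.eq_empty_iff_forall_notMem]
      rintro u ⟨hu1, hu2, hu3⟩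
      have hau : a ∈ T.cluster u := hu2 ▸ self_mem_cluster hv
      have : T.path u v := (mem_cluster_iff hT hv).mp hau
      exact hT.not_pathNT_self (Relation.TransGen.trans_left hu3 this)
    have hp2 : (joinMap T v).2 = 1 := by
      show (D v).ncard + 1 = 1
      rw [hDe]; simp
    have hp1 : T.cluster v ∈ joinC T₁ T₂ := hC ⟨v, hvn, rfl⟩
    refine join_label_eq hp2 hp1 ?_ ?_
    · rintro ⟨Z, ⟨hZC, hZv⟩, haZ⟩
      exact hZv.2 (hlabmin v a hv Z hZC haZ)
    · apply Set.Subset.antisymm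
      · intro b hb
        by_cases hba : b = a
        · exact Or.inr (hba ▸ rfl)
        · obtain ⟨w, hw, hwl⟩ := hb
          have hwv : w ≠ v := fun h => hba (Option.some_inj.mp ((h ▸ hwl).symm.trans hv))
          have hna : a ∉ T.cluster w := by
            intro haw
            have : T.path w v := (mem_cluster_iff hT hv).mp haw
            exact hwv (hT.path_antisymm this hw)
          refine Or.inl ⟨T.cluster w, ⟨hC ⟨w, hT.path_mem hvn hw, rfl⟩,
            cluster_mono hw, fun hs => hna (hs (self_mem_cluster hv))⟩,
            ⟨w, Relation.ReflTransGen.refl, hwl⟩⟩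
      · rintro b (⟨Z, ⟨_, hZv⟩, hbZ⟩ | hb)
        · exact hZv.1 hbZ
        · exact (Set.eq_of_mem_singleton hb) ▸ self_mem_cluster hv
  · -- path preservation/reflection
    intro u hu v hv
    constructor
    · intro h
      refine (join_path_iff h₁ h₂ (hmem u hu) (hmem v hv)).mpr
        ⟨cluster_mono h, fun he => ?_⟩
      have hce : T.cluster u = T.cluster v := he.symm
      have := Set.ncard_le_ncard (hDmono u v h hce) (hDfin u)
      show (D v).ncard + 1 ≤ (D u).ncard + 1
      omega
    · intro h
      obtain ⟨hs, hi⟩ := (join_path_iff h₁ h₂ (hmem u hu) (hmem v hv)).mp h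
      obtain ⟨a, ha⟩ := hT.cluster_nonempty hv
      rcases hcomp u hu v hv ⟨a, hs ha, ha⟩ with hp | hp
      · exact hp
      · by_cases huv : u = v
        · exact huv ▸ Relation.ReflTransGen.refl
        · exfalso
          have hce : T.cluster u = T.cluster v :=
            Set.Subset.antisymm (cluster_mono hp) hs
          have hlt := hDstrict v u hu (hT.pathNT_of_path_ne hp (Ne.symm huv)) hce.symm
          have hle : (D v).ncard + 1 ≤ (D u).ncard + 1 := hi hce.symm
          omega

end PreTree
namespace PreTree

variable {α V W : Type} {T₁ : PreTree α V} {T₂ : PreTree α W}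

lemma smallest_unique {R : Set (Set α)} {a : α} {X Y : Set α}
    (hX : SmallestContaining R a X) (hY : SmallestContaining R a Y) : X = Y :=
  Set.Subset.antisymm (hX.2.2 Y hY.1 hY.2.1) (hY.2.2 X hX.1 hX.2.1)

lemma implC (h₁ : T₁.IsATree) (h₂ : T₂.IsATree) (hl : T₁.labelSet = T₂.labelSet)
    (hsm : ∀ a ∈ T₁.labelSet, ∃ X : Set α,
      SmallestContaining T₁.clusterRep a X ∧ SmallestContaining T₂.clusterRep a X)
    (hnest : ∀ X ∈ T₁.clusterRep, ∀ Y ∈ T₂.clusterRep, (X ∩ Y).Nonempty → X ⊆ Y ∨ Y ⊆ X) :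
    AncCompat T₁ T₂ := by
  refine ⟨Set α × ℕ, join T₁ T₂, join_isATree h₁ h₂ hl hnest,
    ⟨joinMap T₁, joinMap_WTE h₁ h₂ h₁ (fun X hX => Or.inl hX)
      (fun Y => le_max_left _ _) ?_⟩,
    ⟨joinMap T₂, joinMap_WTE h₁ h₂ h₂ (fun X hX => Or.inr hX)
      (fun Y => le_max_right _ _) ?_⟩⟩
  · rintro v a hv Z (hZ | hZ) haZ
    · exact (h₁.smallest_cluster hv).2.2 Z hZ haZ
    · obtain ⟨X, hX1, hX2⟩ := hsm a ⟨v, hv⟩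
      rw [smallest_unique (h₁.smallest_cluster hv) hX1]
      exact hX2.2.2 Z hZ haZ
  · rintro v a hv Z (hZ | hZ) haZ
    · obtain ⟨X, hX1, hX2⟩ := hsm a (hl ▸ ⟨v, hv⟩)
      rw [smallest_unique (h₂.smallest_cluster hv) hX2]
      exact hX1.2.2 Z hZ haZ
    · exact (h₂.smallest_cluster hv).2.2 Z hZ haZ

end PreTree

/-- For 𝒜-trees with the same label set, ancestral compatibility, local
compatibility, and the joint condition on cluster representations are all equivalent. -/
theorem stmt14 {α V W : Type} (T₁ : PreTree α V) (T₂ : PreTree α W)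
    (h₁ : T₁.IsATree) (h₂ : T₂.IsATree) (hl : T₁.labelSet = T₂.labelSet) :
    (PreTree.AncCompat T₁ T₂ ↔ PreTree.LocallyCompatible T₁ T₂) ∧
    (PreTree.LocallyCompatible T₁ T₂ ↔
      ((∀ a ∈ T₁.labelSet, ∃ X : Set α,
          PreTree.SmallestContaining T₁.clusterRep a X ∧
          PreTree.SmallestContaining T₂.clusterRep a X) ∧
       (∀ X ∈ T₁.clusterRep, ∀ Y ∈ T₂.clusterRep,
          (X ∩ Y).Nonempty → X ⊆ Y ∨ Y ⊆ X))) := by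
  constructor
  · constructor
    · exact PreTree.implA h₁ h₂
    · intro h
      obtain ⟨hsm, hnest⟩ := PreTree.implB h₁ h₂ hl h
      exact PreTree.implC h₁ h₂ hl hsm hnest
  · constructor
    · exact PreTree.implB h₁ h₂ hl
    · rintro ⟨hsm, hnest⟩
      exact PreTree.implA h₁ h₂ (PreTree.implC h₁ h₂ hl hsm hnest)
end

section
/- Let T₁ and T₂ be 𝒜-trees with 𝒜(T₁) = 𝒜(T₂) whose cluster representations satisfy: for every A ∈ 𝒜(T₁), the smallest member of 𝒞_𝒜(T₁) containing A equals the smallest member of 𝒞_𝒜(T₂) containing A; and for every X ∈ 𝒞_𝒜(T₁) and Y ∈ 𝒞_𝒜(T₂), if X ∩ Y ≠ ∅ then X ⊆ Y or Y ⊆ X. Then the join T_{1,2} of T₁ and T₂ is an 𝒜-tree, and the canonical maps f₁ : V(T₁) → V(T_{1,2}) and f₂ : V(T₂) → V(T_{1,2}) are weak topological embeddings. -/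
namespace Aux15
open PreTree
variable {α V : Type} {T : PreTree α V} (hT : T.IsATree)

section
include hT

lemma pathNT_irrefl {v : V} : ¬ T.pathNT v v := by
  intro h
  obtain ⟨c, hc, hp⟩ := Relation.TransGen.head'_iff.1 h
  exact hT.acyclic hc hp

lemma not_path_of_pathNT {u v : V} (h : T.pathNT u v) : ¬ T.path v u := by
  intro hp
  obtain ⟨c, hc, hcv⟩ := Relation.TransGen.head'_iff.1 h
  exact hT.acyclic hc (hcv.trans hp)

lemma pathNT_mem_right {u v : V} (h : T.pathNT u v) : v ∈ T.nodes := by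
  cases h with
  | single h => exact hT.arc_mem_right h
  | tail _ h => exact hT.arc_mem_right h

lemma pathNT_mem_left {u v : V} (h : T.pathNT u v) : u ∈ T.nodes := by
  obtain ⟨c, hc, -⟩ := Relation.TransGen.head'_iff.1 h
  exact hT.arc_mem_left hc

lemma anc_comparable {u v w : V} (hu : T.path u w) (hv : T.path v w) :
    T.path u v ∨ T.path v u := by
  induction hu with
  | refl => exact Or.inr hv
  | @tail m w hm harc ih =>
    rcases Relation.ReflTransGen.cases_tail hv with h | ⟨m', hm', harc'⟩
    · subst h; exact Or.inl (hm.tail harc)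
    · rw [hT.parent_unique harc harc'] at ih; exact ih hm'

lemma desc_finite (v : V) : {x | x ∈ T.nodes ∧ T.pathNT v x}.Finite :=
  hT.finite_nodes.subset (fun _ h => h.1)

lemma exists_leaf_desc : ∀ k : ℕ, ∀ v ∈ T.nodes,
    {x | x ∈ T.nodes ∧ T.pathNT v x}.ncard ≤ k →
    ∃ w, T.path v w ∧ w ∈ T.nodes ∧ ∀ x, ¬ T.arc w x := by
  intro k
  induction k with
  | zero =>
    intro v hv hcard
    refine ⟨v, Relation.ReflTransGen.refl, hv, fun x hx => ?_⟩
    have : x ∈ {x | x ∈ T.nodes ∧ T.pathNT v x} := ⟨hT.arc_mem_right hx, .single hx⟩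
    have := Set.ncard_pos (desc_finite hT v) |>.2 ⟨x, this⟩
    omega
  | succ k ih =>
    intro v hv hcard
    by_cases h : ∀ x, ¬ T.arc v x
    · exact ⟨v, Relation.ReflTransGen.refl, hv, h⟩
    · push_neg at h
      obtain ⟨c, hc⟩ := h
      have hsub : {x | x ∈ T.nodes ∧ T.pathNT c x} ⊂ {x | x ∈ T.nodes ∧ T.pathNT v x} := by
        constructor
        · exact fun x hx => ⟨hx.1, hx.2.head hc⟩
        · intro hcontra
          have : c ∈ {x | x ∈ T.nodes ∧ T.pathNT c x} :=
            hcontra ⟨hT.arc_mem_right hc, .single hc⟩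
          exact pathNT_irrefl hT this.2
      have hlt := Set.ncard_lt_ncard hsub (desc_finite hT v)
      obtain ⟨w, hw1, hw2, hw3⟩ := ih c (hT.arc_mem_right hc) (by omega)
      exact ⟨w, hw1.head hc, hw2, hw3⟩

lemma exists_leaf {v : V} (hv : v ∈ T.nodes) :
    ∃ w, T.path v w ∧ w ∈ T.nodes ∧ ∀ x, ¬ T.arc w x :=
  exists_leaf_desc hT _ v hv le_rfl

lemma cluster_nonempty {v : V} (hv : v ∈ T.nodes) : (T.cluster v).Nonempty := by
  obtain ⟨w, hw1, hw2, hw3⟩ := exists_leaf hT hv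
  obtain ⟨a, ha⟩ := hT.leaf_labeled w hw2 hw3
  exact ⟨a, w, hw1, ha⟩

end

lemma cluster_mono {T : PreTree α V} {u v : V} (h : T.path u v) :
    T.cluster v ⊆ T.cluster u := fun a ⟨w, hw, hl⟩ => ⟨w, h.trans hw, hl⟩

lemma cluster_subset_labelSet {T : PreTree α V} (v : V) : T.cluster v ⊆ T.labelSet :=
  fun _ ⟨w, _, hl⟩ => ⟨w, hl⟩

lemma mem_cluster_self {T : PreTree α V} {v : V} {a : α} (h : T.label v = some a) :
    a ∈ T.cluster v := ⟨v, Relation.ReflTransGen.refl, h⟩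

section
include hT

lemma labelSet_finite : T.labelSet.Finite := by
  have : T.labelSet ⊆ ⋃ v ∈ T.nodes, {a | T.label v = some a} := by
    rintro a ⟨v, hv⟩
    exact Set.mem_biUnion (hT.label_mem hv) hv
  refine Set.Finite.subset (Set.Finite.biUnion hT.finite_nodes fun v _ => ?_) this
  apply Set.Subsingleton.finite
  intro a ha b hb
  simp only [Set.mem_setOf_eq] at ha hb
  rw [ha] at hb; exact Option.some_injective _ hb

lemma clusterRep_finite : T.clusterRep.Finite := by
  have : T.clusterRep ⊆ T.cluster '' T.nodes := by
    rintro C ⟨v, hv, rfl⟩; exact ⟨v, hv, rfl⟩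
  exact (hT.finite_nodes.image _).subset this

lemma comparable_of_inter {u v : V}
    (h : (T.cluster u ∩ T.cluster v).Nonempty) : T.path u v ∨ T.path v u := by
  obtain ⟨a, ⟨w₁, hw₁, hl₁⟩, ⟨w₂, hw₂, hl₂⟩⟩ := h
  rw [hT.label_inj hl₂ hl₁] at hw₂
  exact anc_comparable hT hw₁ hw₂

lemma mcount_pos {Y : Set α} (h : Y ∈ T.clusterRep) : 1 ≤ mcount T Y := by
  obtain ⟨v, hv, rfl⟩ := h
  have hfin : {u | u ∈ T.nodes ∧ T.cluster u = T.cluster v}.Finite :=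
    hT.finite_nodes.subset fun _ h => h.1
  exact Set.ncard_pos hfin |>.2 ⟨v, hv, rfl⟩

end
end Aux15

namespace Aux15
open PreTree
variable {α V : Type} {T : PreTree α V} (hT : T.IsATree)

/-- The descendant set used by `joinMap`'s index. -/
def idxSet (T : PreTree α V) (v : V) : Set V :=
  {u | u ∈ T.nodes ∧ T.cluster u = T.cluster v ∧ T.pathNT v u}

section
include hT

lemma idxSet_finite (v : V) : (idxSet T v).Finite :=
  hT.finite_nodes.subset fun _ h => h.1

lemma idxSet_eq_joinMapSet (v : V) :
    {u | u ∈ T.nodes ∧ T.cluster u = T.cluster v ∧ T.pathNT v u} = idxSet T v := rfl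

lemma idx_lt {u v : V} (h : T.pathNT u v) (hc : T.cluster u = T.cluster v)
    (hv : v ∈ T.nodes) : (idxSet T v).ncard < (idxSet T u).ncard := by
  have hsub : insert v (idxSet T v) ⊆ idxSet T u := by
    rintro x (rfl | ⟨hx1, hx2, hx3⟩)
    · exact ⟨hv, hc.symm, h⟩
    · exact ⟨hx1, hx2.trans hc.symm, h.trans hx3⟩
  have hnm : v ∉ idxSet T v := fun hx => pathNT_irrefl hT hx.2.2
  have := Set.ncard_le_ncard hsub (idxSet_finite hT u)
  rw [Set.ncard_insert_of_notMem hnm (idxSet_finite hT v)] at this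
  omega

lemma idx_le {u v : V} (h : T.path u v) (hc : T.cluster u = T.cluster v)
    (hv : v ∈ T.nodes) : (idxSet T v).ncard ≤ (idxSet T u).ncard := by
  rcases Relation.reflTransGen_iff_eq_or_transGen.1 h with rfl | h
  · exact le_rfl
  · exact (idx_lt hT h hc hv).le

lemma idx_lt_mcount {v : V} (hv : v ∈ T.nodes) :
    (idxSet T v).ncard + 1 ≤ mcount T (T.cluster v) := by
  have hsub : insert v (idxSet T v) ⊆ {u | u ∈ T.nodes ∧ T.cluster u = T.cluster v} := by
    rintro x (rfl | ⟨hx1, hx2, _⟩)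
    · exact ⟨hv, rfl⟩
    · exact ⟨hx1, hx2⟩
  have hnm : v ∉ idxSet T v := fun hx => pathNT_irrefl hT hx.2.2
  have hfin : {u | u ∈ T.nodes ∧ T.cluster u = T.cluster v}.Finite :=
    hT.finite_nodes.subset fun _ h => h.1
  have := Set.ncard_le_ncard hsub hfin
  rwa [Set.ncard_insert_of_notMem hnm (idxSet_finite hT v)] at this

/-- A labeled node's cluster is the smallest cluster containing its label. -/
lemma cluster_smallest {v : V} {a : α} (hl : T.label v = some a) :
    ∀ X ∈ T.clusterRep, a ∈ X → T.cluster v ⊆ X := by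
  rintro X ⟨z, hz, rfl⟩ ⟨w, hw, hwl⟩
  rw [hT.label_inj hwl hl] at hw
  exact cluster_mono hw

/-- A labeled node has no proper descendant with the same cluster. -/
lemma idxSet_labeled_empty {v : V} {a : α} (hl : T.label v = some a) :
    idxSet T v = ∅ := by
  ext w
  simp only [idxSet, Set.mem_setOf_eq, Set.mem_empty_iff_false, iff_false]
  rintro ⟨hw, hc, hp⟩
  have ha : a ∈ T.cluster w := hc.symm ▸ mem_cluster_self hl
  obtain ⟨w', hw', hwl'⟩ := ha
  rw [hT.label_inj hwl' hl] at hw'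
  exact not_path_of_pathNT hT hp hw'

/-- Leaf clusters are singletons. -/
lemma leaf_cluster_singleton {w : V} {a : α} (hw3 : ∀ x, ¬ T.arc w x)
    (hl : T.label w = some a) : T.cluster w = {a} := by
  ext b
  simp only [Set.mem_singleton_iff]
  constructor
  · rintro ⟨x, hx, hxl⟩
    rcases Relation.reflTransGen_iff_eq_or_transGen.1 hx with rfl | hx
    · rw [hl] at hxl; exact (Option.some_injective _ hxl).symm
    · obtain ⟨c, hc, -⟩ := Relation.TransGen.head'_iff.1 hx
      exact absurd hc (hw3 c)
  · rintro rfl; exact mem_cluster_self hl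

/-- Every node has a descendant leaf whose (singleton) cluster is inside its cluster. -/
lemma exists_singleton_sub {v : V} (hv : v ∈ T.nodes) :
    ∃ a : α, {a} ∈ T.clusterRep ∧ {a} ⊆ T.cluster v := by
  obtain ⟨w, hw1, hw2, hw3⟩ := exists_leaf hT hv
  obtain ⟨a, ha⟩ := hT.leaf_labeled w hw2 hw3
  have hs := leaf_cluster_singleton hT hw3 ha
  exact ⟨a, ⟨w, hw2, hs⟩, hs ▸ cluster_mono hw1⟩

/-- Root cluster equals the label set. -/
lemma root_cluster {r : V} (hr : r ∈ T.nodes) (hroot : ∀ v ∈ T.nodes, T.path r v) :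
    T.cluster r = T.labelSet := by
  apply Set.Subset.antisymm (cluster_subset_labelSet r)
  rintro a ⟨w, hw⟩
  exact ⟨w, hroot w (hT.label_mem hw), hw⟩

/-- Strict descendants pass through a child. -/
lemma child_of_pathNT {v w : V} (h : T.pathNT v w) :
    ∃ c, T.arc v c ∧ T.path c w := Relation.TransGen.head'_iff.1 h

end
end Aux15

namespace Aux15
open PreTree
variable {α V W : Type} {T₁ : PreTree α V} {T₂ : PreTree α W}

lemma join_nodes_iff {p : Set α × ℕ} :
    p ∈ (join T₁ T₂).nodes ↔ p.1 ∈ joinC T₁ T₂ ∧ 1 ≤ p.2 ∧ p.2 ≤ joinN T₁ T₂ p.1 :=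
  Iff.rfl

lemma join_arc_iff {p q : Set α × ℕ} :
    (join T₁ T₂).arc p q ↔ p.1 ∈ joinC T₁ T₂ ∧ q.1 ∈ joinC T₁ T₂ ∧
    ((q.1 = p.1 ∧ p.2 = q.2 + 1 ∧ 1 ≤ q.2 ∧ p.2 ≤ joinN T₁ T₂ p.1) ∨
     (p.2 = 1 ∧ q.1 ⊂ p.1 ∧ q.2 = joinN T₁ T₂ q.1 ∧ 1 ≤ q.2 ∧
       ¬ ∃ Z ∈ joinC T₁ T₂, q.1 ⊂ Z ∧ Z ⊂ p.1)) := Iff.rfl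

section
variable (h₁ : T₁.IsATree) (h₂ : T₂.IsATree)
include h₁ h₂

lemma joinC_nonempty {Y : Set α} (hY : Y ∈ joinC T₁ T₂) : Y.Nonempty := by
  rcases hY with ⟨v, hv, rfl⟩ | ⟨v, hv, rfl⟩
  · exact cluster_nonempty h₁ hv
  · exact cluster_nonempty h₂ hv

lemma joinC_finite : (joinC T₁ T₂).Finite :=
  (clusterRep_finite h₁).union (clusterRep_finite h₂)

lemma joinN_pos {Y : Set α} (hY : Y ∈ joinC T₁ T₂) : 1 ≤ joinN T₁ T₂ Y := by
  rcases hY with h | h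
  · exact le_max_of_le_left (mcount_pos h₁ h)
  · exact le_max_of_le_right (mcount_pos h₂ h)

lemma laminar (hint : ∀ X ∈ T₁.clusterRep, ∀ Y ∈ T₂.clusterRep,
      (X ∩ Y).Nonempty → X ⊆ Y ∨ Y ⊆ X)
    {X Y : Set α} (hX : X ∈ joinC T₁ T₂) (hY : Y ∈ joinC T₁ T₂)
    (hne : (X ∩ Y).Nonempty) : X ⊆ Y ∨ Y ⊆ X := by
  rcases hX with hX | hX <;> rcases hY with hY | hY
  · obtain ⟨u, hu, rfl⟩ := hX; obtain ⟨v, hv, rfl⟩ := hY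
    rcases comparable_of_inter h₁ hne with h | h
    · exact Or.inr (cluster_mono h)
    · exact Or.inl (cluster_mono h)
  · exact hint X hX Y hY hne
  · exact (hint Y hY X hX (Set.inter_comm X Y ▸ hne)).symm
  · obtain ⟨u, hu, rfl⟩ := hX; obtain ⟨v, hv, rfl⟩ := hY
    rcases comparable_of_inter h₂ hne with h | h
    · exact Or.inr (cluster_mono h)
    · exact Or.inl (cluster_mono h)

end

/-- The counting function used for acyclicity. -/
noncomputable def cfun (T₁ : PreTree α V) (T₂ : PreTree α W) (Y : Set α) : ℕ :=
  {Z | Z ∈ joinC T₁ T₂ ∧ Z ⊆ Y}.ncard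

section
variable (h₁ : T₁.IsATree) (h₂ : T₂.IsATree)
include h₁ h₂

lemma cfun_lt {Z Y : Set α} (hY : Y ∈ joinC T₁ T₂) (hZY : Z ⊂ Y) :
    cfun T₁ T₂ Z < cfun T₁ T₂ Y := by
  apply Set.ncard_lt_ncard
  · constructor
    · exact fun X hX => ⟨hX.1, hX.2.trans hZY.subset⟩
    · intro hcontra
      exact hZY.not_subset (hcontra ⟨hY, le_refl Y⟩).2
  · exact (joinC_finite h₁ h₂).subset fun _ h => h.1

lemma arc_measure {p q : Set α × ℕ} (h : (join T₁ T₂).arc p q) :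
    cfun T₁ T₂ q.1 < cfun T₁ T₂ p.1 ∨ (q.1 = p.1 ∧ q.2 < p.2) := by
  obtain ⟨hp, hq, hcase⟩ := join_arc_iff.1 h
  rcases hcase with ⟨heq, hsucc, -, -⟩ | ⟨-, hsub, -, -, -⟩
  · exact Or.inr ⟨heq, by omega⟩
  · exact Or.inl (cfun_lt h₁ h₂ hp hsub)

lemma pathNT_measure {p q : Set α × ℕ} (h : (join T₁ T₂).pathNT p q) :
    cfun T₁ T₂ q.1 < cfun T₁ T₂ p.1 ∨ (q.1 = p.1 ∧ q.2 < p.2) := by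
  induction h with
  | single h => exact arc_measure h₁ h₂ h
  | tail _ h ih =>
    rcases arc_measure h₁ h₂ h with h' | ⟨he, hlt⟩
    · rcases ih with h'' | ⟨he2, -⟩
      · exact Or.inl (h'.trans h'')
      · exact Or.inl (he2 ▸ h')
    · rcases ih with h'' | ⟨he2, hlt2⟩
      · exact Or.inl (he ▸ h'')
      · exact Or.inr ⟨he.trans he2, by omega⟩

lemma join_acyclic {p q : Set α × ℕ} (h : (join T₁ T₂).arc p q) :
    ¬ (join T₁ T₂).path q p := by
  intro hp
  have : (join T₁ T₂).pathNT p p := Relation.TransGen.head'_iff.2 ⟨q, h, hp⟩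
  rcases pathNT_measure h₁ h₂ this with h' | ⟨-, h'⟩ <;> omega

lemma chainPath {Y : Set α} (hY : Y ∈ joinC T₁ T₂) {j : ℕ} (hj : 1 ≤ j) :
    ∀ i, j ≤ i → i ≤ joinN T₁ T₂ Y → (join T₁ T₂).path (Y, i) (Y, j) := by
  intro i
  induction i with
  | zero => intro h1 _; interval_cases j
  | succ i ih =>
    intro h1 h2
    rcases Nat.eq_or_lt_of_le h1 with rfl | hlt
    · exact Relation.ReflTransGen.refl
    · have harc : (join T₁ T₂).arc (Y, i + 1) (Y, i) :=
        join_arc_iff.2 ⟨hY, hY, Or.inl ⟨rfl, rfl, by omega, h2⟩⟩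
      exact Relation.ReflTransGen.head harc (ih (by omega) (by omega))

lemma exists_arc_of_ssub (hint : ∀ X ∈ T₁.clusterRep, ∀ Y ∈ T₂.clusterRep,
      (X ∩ Y).Nonempty → X ⊆ Y ∨ Y ⊆ X)
    {Y Z : Set α} (hY : Y ∈ joinC T₁ T₂) (hZ : Z ∈ joinC T₁ T₂) (hZY : Z ⊂ Y) :
    ∃ Z'' ∈ joinC T₁ T₂, Z ⊆ Z'' ∧ Z'' ⊂ Y ∧
      (join T₁ T₂).arc (Y, 1) (Z'', joinN T₁ T₂ Z'') := by
  set S : Set (Set α) := {Z' | Z' ∈ joinC T₁ T₂ ∧ Z ⊆ Z' ∧ Z' ⊂ Y} with hS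
  have hSfin : S.Finite := (joinC_finite h₁ h₂).subset fun _ h => h.1
  have hSne : S.Nonempty := ⟨Z, hZ, le_refl Z, hZY⟩
  obtain ⟨Z'', hZ''S, hmax⟩ : ∃ a ∈ S, ∀ a' ∈ S, id a ≤ id a' → id a = id a' := by
    obtain ⟨i, hi, hm⟩ := hSfin.exists_maximal hSne
    exact ⟨i, hi, fun a' ha' hle => le_antisymm hle (hm ha' hle)⟩
  refine ⟨Z'', hZ''S.1, hZ''S.2.1, hZ''S.2.2, ?_⟩
  refine join_arc_iff.2 ⟨hY, hZ''S.1, Or.inr ⟨rfl, hZ''S.2.2, rfl,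
    joinN_pos h₁ h₂ hZ''S.1, ?_⟩⟩
  rintro ⟨Z', hZ'C, hZ''Z', hZ'Y⟩
  have hZ'S : Z' ∈ S := ⟨hZ'C, hZ''S.2.1.trans hZ''Z'.subset, hZ'Y⟩
  exact hZ''Z'.ne (hmax Z' hZ'S hZ''Z'.subset)

lemma lemJ (hint : ∀ X ∈ T₁.clusterRep, ∀ Y ∈ T₂.clusterRep,
      (X ∩ Y).Nonempty → X ⊆ Y ∨ Y ⊆ X) :
    ∀ k : ℕ, ∀ Y ∈ joinC T₁ T₂, ∀ Z ∈ joinC T₁ T₂, Z ⊂ Y →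
    {Z' | Z' ∈ joinC T₁ T₂ ∧ Z ⊆ Z' ∧ Z' ⊂ Y}.ncard ≤ k →
    (join T₁ T₂).path (Y, 1) (Z, joinN T₁ T₂ Z) := by
  intro k
  induction k with
  | zero =>
    intro Y hY Z hZ hZY hcard
    have hfin : {Z' | Z' ∈ joinC T₁ T₂ ∧ Z ⊆ Z' ∧ Z' ⊂ Y}.Finite :=
      (joinC_finite h₁ h₂).subset fun _ h => h.1
    have := Set.ncard_pos hfin |>.2 ⟨Z, hZ, le_refl Z, hZY⟩
    omega
  | succ k ih =>
    intro Y hY Z hZ hZY hcard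
    obtain ⟨Z'', hZ''C, hZZ'', hZ''Y, harc⟩ := exists_arc_of_ssub h₁ h₂ hint hY hZ hZY
    rcases eq_or_ne Z'' Z with rfl | hne
    · exact Relation.ReflTransGen.single harc
    · have hZZ''s : Z ⊂ Z'' := ⟨hZZ'', fun h => hne (le_antisymm h hZZ'')⟩
      have hchain := chainPath h₁ h₂ hZ''C (le_refl 1) (joinN T₁ T₂ Z'')
        (joinN_pos h₁ h₂ hZ''C) (le_refl _)
      have hsub : {Z' | Z' ∈ joinC T₁ T₂ ∧ Z ⊆ Z' ∧ Z' ⊂ Z''} ⊂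
          {Z' | Z' ∈ joinC T₁ T₂ ∧ Z ⊆ Z' ∧ Z' ⊂ Y} := by
        constructor
        · exact fun X hX => ⟨hX.1, hX.2.1, hX.2.2.trans hZ''Y⟩
        · intro hcontra
          exact (hcontra ⟨hZ''C, hZZ'', hZ''Y⟩).2.2.ne rfl
      have hlt := Set.ncard_lt_ncard hsub ((joinC_finite h₁ h₂).subset fun _ h => h.1)
      have := ih Z'' hZ''C Z hZ hZZ''s (by omega)
      exact (Relation.ReflTransGen.single harc).trans (hchain.trans this)

lemma joinPath_sub {p q : Set α × ℕ} (h : (join T₁ T₂).path p q) :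
    q.1 ⊆ p.1 ∧ (q.1 = p.1 → q.2 ≤ p.2) := by
  induction h with
  | refl => exact ⟨le_refl _, fun _ => le_refl _⟩
  | @tail m q hm harc ih =>
    obtain ⟨-, -, hcase⟩ := join_arc_iff.1 harc
    rcases hcase with ⟨heq, hsucc, -, -⟩ | ⟨-, hsub, -, -, -⟩
    · refine ⟨heq ▸ ih.1, fun he => ?_⟩
      have := ih.2 (heq ▸ he)
      omega
    · refine ⟨hsub.subset.trans ih.1, fun he => absurd ?_ hsub.not_subset⟩
      exact he ▸ ih.1

end
end Aux15

namespace Aux15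
open PreTree
variable {α V W : Type} {T₁ : PreTree α V} {T₂ : PreTree α W}

open Classical in
lemma join_label_def (p : Set α × ℕ) : (join T₁ T₂).label p =
    if h : p.2 = 1 ∧ p.1 ∈ joinC T₁ T₂ ∧
        ∃ a : α, a ∉ ⋃₀ {Z ∈ joinC T₁ T₂ | Z ⊂ p.1} ∧
          p.1 = (⋃₀ {Z ∈ joinC T₁ T₂ | Z ⊂ p.1}) ∪ {a}
    then some h.2.2.choose else none := rfl

lemma label_witness_unique {U Y : Set α} {a b : α}
    (ha : a ∉ U ∧ Y = U ∪ {a}) (hb : b ∉ U ∧ Y = U ∪ {b}) : a = b := by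
  have : a ∈ U ∪ {b} := hb.2 ▸ (ha.2 ▸ (Set.mem_union_right U rfl))
  rcases this with h | h
  · exact absurd h ha.1
  · exact h

lemma join_label_eq {p : Set α × ℕ} {a : α} (h1 : p.2 = 1) (h2 : p.1 ∈ joinC T₁ T₂)
    (ha : a ∉ ⋃₀ {Z ∈ joinC T₁ T₂ | Z ⊂ p.1})
    (he : p.1 = (⋃₀ {Z ∈ joinC T₁ T₂ | Z ⊂ p.1}) ∪ {a}) :
    (join T₁ T₂).label p = some a := by
  rw [join_label_def]
  have hP : p.2 = 1 ∧ p.1 ∈ joinC T₁ T₂ ∧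
      ∃ a : α, a ∉ ⋃₀ {Z ∈ joinC T₁ T₂ | Z ⊂ p.1} ∧
        p.1 = (⋃₀ {Z ∈ joinC T₁ T₂ | Z ⊂ p.1}) ∪ {a} := ⟨h1, h2, a, ha, he⟩
  rw [dif_pos hP]
  exact congrArg some (label_witness_unique hP.2.2.choose_spec ⟨ha, he⟩)

lemma join_label_spec {p : Set α × ℕ} {a : α} (h : (join T₁ T₂).label p = some a) :
    p.2 = 1 ∧ p.1 ∈ joinC T₁ T₂ ∧ a ∉ ⋃₀ {Z ∈ joinC T₁ T₂ | Z ⊂ p.1} ∧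
      p.1 = (⋃₀ {Z ∈ joinC T₁ T₂ | Z ⊂ p.1}) ∪ {a} := by
  rw [join_label_def] at h
  by_cases hP : p.2 = 1 ∧ p.1 ∈ joinC T₁ T₂ ∧
      ∃ a : α, a ∉ ⋃₀ {Z ∈ joinC T₁ T₂ | Z ⊂ p.1} ∧
        p.1 = (⋃₀ {Z ∈ joinC T₁ T₂ | Z ⊂ p.1}) ∪ {a}
  · rw [dif_pos hP] at h
    have hc := hP.2.2.choose_spec
    have : hP.2.2.choose = a := Option.some_injective _ h
    rw [this] at hc
    exact ⟨hP.1, hP.2.1, hc.1, hc.2⟩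
  · rw [dif_neg hP] at h; exact absurd h (by simp)

lemma joinMap_eq {V' : Type} (T : PreTree α V') (v : V') :
    joinMap T v = (T.cluster v, (idxSet T v).ncard + 1) := rfl

section
variable (h₁ : T₁.IsATree) (h₂ : T₂.IsATree)
  (hint : ∀ X ∈ T₁.clusterRep, ∀ Y ∈ T₂.clusterRep,
      (X ∩ Y).Nonempty → X ⊆ Y ∨ Y ⊆ X)
include h₁ h₂ hint

lemma wte_aux {V' : Type} {T : PreTree α V'} (hT : T.IsATree)
    (hrep : T.clusterRep ⊆ joinC T₁ T₂)
    (hm : ∀ Y : Set α, mcount T Y ≤ joinN T₁ T₂ Y)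
    (hsmall : ∀ (v : V') (a : α), T.label v = some a →
        ∀ Z ∈ joinC T₁ T₂, a ∈ Z → T.cluster v ⊆ Z) :
    IsWTE T (join T₁ T₂) (joinMap T) := by
  have hmem : ∀ v ∈ T.nodes, joinMap T v ∈ (join T₁ T₂).nodes := by
    intro v hv
    refine join_nodes_iff.2 ⟨hrep ⟨v, hv, rfl⟩, by simp [joinMap_eq], ?_⟩
    exact (idx_lt_mcount hT hv).trans (hm _)
  refine ⟨hmem, ?_, ?_, ?_⟩
  · -- injectivity
    intro u hu v hv he
    rw [joinMap_eq, joinMap_eq, Prod.mk.injEq] at he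
    have hne : (T.cluster u ∩ T.cluster v).Nonempty := by
      rw [he.1, Set.inter_self]; exact cluster_nonempty hT hv
    rcases comparable_of_inter hT hne with h | h
    · rcases Relation.reflTransGen_iff_eq_or_transGen.1 h with h' | h'
      · exact h'.symm
      · have := idx_lt hT h' he.1 hv; omega
    · rcases Relation.reflTransGen_iff_eq_or_transGen.1 h with h' | h'
      · exact h'
      · have := idx_lt hT h' he.1.symm hu; omega
  · -- labels
    intro v a hla
    have hv := hT.label_mem hla
    have hY : T.cluster v ∈ joinC T₁ T₂ := hrep ⟨v, hv, rfl⟩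
    have hmap : joinMap T v = (T.cluster v, 1) := by
      rw [joinMap_eq, idxSet_labeled_empty hT hla, Set.ncard_empty]
    rw [hmap]
    have hnotin : a ∉ ⋃₀ {Z ∈ joinC T₁ T₂ | Z ⊂ (T.cluster v, 1).1} := by
      rintro ⟨Z, ⟨hZC, hZY⟩, haZ⟩
      exact hZY.not_subset (hsmall v a hla Z hZC haZ)
    refine join_label_eq rfl hY hnotin ?_
    apply Set.Subset.antisymm
    · rintro b ⟨w, hw, hwl⟩
      rcases eq_or_ne b a with rfl | hba
      · exact Set.mem_union_right _ rfl
      · have hwv : w ≠ v := by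
          rintro rfl; rw [hla] at hwl
          exact hba (Option.some_injective _ hwl).symm
        have hpNT : T.pathNT v w :=
          (Relation.reflTransGen_iff_eq_or_transGen.1 hw).resolve_left hwv
        obtain ⟨c, hc, hcw⟩ := child_of_pathNT hT hpNT
        refine Set.mem_union_left _ ⟨T.cluster c, ⟨hrep ⟨c, hT.arc_mem_right hc, rfl⟩, ?_⟩,
          w, hcw, hwl⟩
        constructor
        · exact cluster_mono (Relation.ReflTransGen.single hc)
        · intro hcon
          obtain ⟨w', hw', hwl'⟩ := hcon (mem_cluster_self hla)
          rw [hT.label_inj hwl' hla] at hw'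
          exact hT.acyclic hc hw'
    · rintro b (⟨Z, ⟨-, hZY⟩, hbZ⟩ | rfl)
      · exact hZY.subset hbZ
      · exact mem_cluster_self hla
  · -- paths
    intro u hu v hv
    constructor
    · intro huv
      have hsub : T.cluster v ⊆ T.cluster u := cluster_mono huv
      have hYC : T.cluster u ∈ joinC T₁ T₂ := hrep ⟨u, hu, rfl⟩
      have hZC : T.cluster v ∈ joinC T₁ T₂ := hrep ⟨v, hv, rfl⟩
      rw [joinMap_eq, joinMap_eq]
      rcases hsub.lt_or_eq with hlt | heq
      · have p1 : (join T₁ T₂).path (T.cluster u, (idxSet T u).ncard + 1) (T.cluster u, 1) :=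
          chainPath h₁ h₂ hYC le_rfl _ (by omega) ((idx_lt_mcount hT hu).trans (hm _))
        have p2 := lemJ h₁ h₂ hint _ (T.cluster u) hYC (T.cluster v) hZC hlt le_rfl
        have p3 : (join T₁ T₂).path (T.cluster v, joinN T₁ T₂ (T.cluster v))
            (T.cluster v, (idxSet T v).ncard + 1) :=
          chainPath h₁ h₂ hZC (by omega) _ ((idx_lt_mcount hT hv).trans (hm _)) le_rfl
        exact (p1.trans p2).trans p3
      · rw [heq]
        exact chainPath h₁ h₂ hYC (by omega) _
          (by have := idx_le hT huv heq.symm hv; omega)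
          ((idx_lt_mcount hT hu).trans (hm _))
    · intro hjp
      obtain ⟨hsub, himp⟩ := joinPath_sub h₁ h₂ hjp
      rw [joinMap_eq, joinMap_eq] at hsub himp
      simp only at hsub himp
      have hne : (T.cluster u ∩ T.cluster v).Nonempty := by
        obtain ⟨a, ha⟩ := cluster_nonempty hT hv
        exact ⟨a, hsub ha, ha⟩
      rcases comparable_of_inter hT hne with h | h
      · exact h
      · rcases Relation.reflTransGen_iff_eq_or_transGen.1 h with h' | h'
        · exact h' ▸ Relation.ReflTransGen.refl
        · have heq : T.cluster v = T.cluster u :=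
            Set.Subset.antisymm hsub (cluster_mono h)
          have h1 := himp heq
          have h2 := idx_lt hT h' heq hu
          omega

end
end Aux15

namespace Aux15
open PreTree
variable {α V W : Type} {T₁ : PreTree α V} {T₂ : PreTree α W}

lemma labelSet_mem_rep {T : PreTree α V} (hT : T.IsATree) (hne : T.nodes.Nonempty) :
    T.labelSet ∈ T.clusterRep := by
  obtain ⟨r, hr, hroot⟩ := hT.rooted hne
  exact ⟨r, hr, root_cluster hT hr hroot⟩

section
variable (h₁ : T₁.IsATree) (h₂ : T₂.IsATree) (hl : T₁.labelSet = T₂.labelSet)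
  (hint : ∀ X ∈ T₁.clusterRep, ∀ Y ∈ T₂.clusterRep,
      (X ∩ Y).Nonempty → X ⊆ Y ∨ Y ⊆ X)
include h₁ h₂ hint

lemma join_isATree (hl : T₁.labelSet = T₂.labelSet) : (join T₁ T₂).IsATree := by
  constructor
  case finite_nodes =>
    refine Set.Finite.subset (Set.Finite.biUnion (joinC_finite h₁ h₂)
      (fun Y _ => ((Set.finite_Icc 1 (joinN T₁ T₂ Y)).image (fun j => (Y, j))))) ?_
    rintro ⟨Y, j⟩ ⟨hY, hj1, hj2⟩
    exact Set.mem_biUnion hY ⟨j, ⟨hj1, hj2⟩, rfl⟩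
  case arc_mem_left =>
    intro p q h
    obtain ⟨hp, hq, hc⟩ := join_arc_iff.1 h
    rcases hc with ⟨-, h2, h3, h4⟩ | ⟨h2, -, -, -, -⟩
    · exact ⟨hp, by omega, h4⟩
    · exact ⟨hp, by omega, by rw [h2]; exact joinN_pos h₁ h₂ hp⟩
  case arc_mem_right =>
    intro p q h
    obtain ⟨hp, hq, hc⟩ := join_arc_iff.1 h
    rcases hc with ⟨e1, e2, e3, e4⟩ | ⟨-, -, e3, e4, -⟩
    · refine ⟨hq, e3, ?_⟩
      rw [e1]; omega
    · exact ⟨hq, e4, le_of_eq e3⟩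
  case parent_unique =>
    intro p p' q h h'
    obtain ⟨hp, hq, hc⟩ := join_arc_iff.1 h
    obtain ⟨hp', -, hc'⟩ := join_arc_iff.1 h'
    rcases hc with ⟨a1, a2, a3, a4⟩ | ⟨a1, a2, a3, a4, a5⟩ <;>
      rcases hc' with ⟨b1, b2, b3, b4⟩ | ⟨b1, b2, b3, b4, b5⟩
    · exact Prod.ext (by rw [← a1, ← b1]) (by omega)
    · exfalso; rw [← a1] at a4; omega
    · exfalso; rw [← b1] at b4; omega
    · have hne : (p.1 ∩ p'.1).Nonempty := by
        obtain ⟨x, hx⟩ := joinC_nonempty h₁ h₂ hq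
        exact ⟨x, a2.subset hx, b2.subset hx⟩
      have heq : p.1 = p'.1 := by
        rcases laminar h₁ h₂ hint hp hp' hne with hs | hs
        · rcases hs.lt_or_eq with hlt | hE
          · exact absurd ⟨p.1, hp, a2, hlt⟩ b5
          · exact hE
        · rcases hs.lt_or_eq with hlt | hE
          · exact absurd ⟨p'.1, hp', b2, hlt⟩ a5
          · exact hE.symm
      exact Prod.ext heq (by omega)
  case acyclic => exact fun h => join_acyclic h₁ h₂ h
  case rooted =>
    rintro ⟨p, hpC, -, -⟩
    have hA : T₁.labelSet ∈ joinC T₁ T₂ := by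
      rcases hpC with ⟨v, hv, -⟩ | ⟨v, hv, -⟩
      · exact Or.inl (labelSet_mem_rep h₁ ⟨v, hv⟩)
      · exact Or.inr (hl ▸ labelSet_mem_rep h₂ ⟨v, hv⟩)
    have htop : ∀ Z ∈ joinC T₁ T₂, Z ⊆ T₁.labelSet := by
      rintro Z (⟨v, hv, rfl⟩ | ⟨v, hv, rfl⟩)
      · exact cluster_subset_labelSet v
      · exact hl ▸ cluster_subset_labelSet v
    refine ⟨(T₁.labelSet, joinN T₁ T₂ T₁.labelSet),
      ⟨hA, joinN_pos h₁ h₂ hA, le_rfl⟩, ?_⟩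
    rintro ⟨Q, j⟩ ⟨hQ, hj1, hj2⟩
    rcases (htop Q hQ).lt_or_eq with hlt | hE
    · have p1 := chainPath h₁ h₂ hA le_rfl _ (joinN_pos h₁ h₂ hA) le_rfl
      have p2 := lemJ h₁ h₂ hint _ _ hA Q hQ hlt le_rfl
      have p3 := chainPath h₁ h₂ hQ hj1 (joinN T₁ T₂ Q) hj2 le_rfl
      exact (p1.trans p2).trans p3
    · subst hE
      exact chainPath h₁ h₂ hA hj1 _ hj2 le_rfl
  case label_mem =>
    intro p a h
    obtain ⟨h1, h2, -, -⟩ := join_label_spec h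
    exact ⟨h2, by omega, by rw [h1]; exact joinN_pos h₁ h₂ h2⟩
  case label_inj =>
    intro p q a hp hq
    obtain ⟨p1, pC, pna, pe⟩ := join_label_spec hp
    obtain ⟨q1, qC, qna, qe⟩ := join_label_spec hq
    have hap : a ∈ p.1 := pe ▸ Set.mem_union_right _ rfl
    have haq : a ∈ q.1 := qe ▸ Set.mem_union_right _ rfl
    have heq : p.1 = q.1 := by
      rcases laminar h₁ h₂ hint pC qC ⟨a, hap, haq⟩ with hs | hs
      · rcases hs.lt_or_eq with hlt | hE
        · exact absurd ⟨p.1, ⟨pC, hlt⟩, hap⟩ qna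
        · exact hE
      · rcases hs.lt_or_eq with hlt | hE
        · exact absurd ⟨q.1, ⟨qC, hlt⟩, haq⟩ pna
        · exact hE.symm
    exact Prod.ext heq (by omega)
  case leaf_labeled =>
    rintro ⟨Y, j⟩ ⟨hY, hj1, hj2⟩ hleaf
    have hj : j = 1 := by
      by_contra hne
      exact hleaf (Y, j-1)
        (join_arc_iff.2 ⟨hY, hY, Or.inl ⟨rfl, by omega, by omega, hj2⟩⟩)
    subst hj
    have hnoZ : ¬ ∃ Z ∈ joinC T₁ T₂, Z ⊂ Y := by
      rintro ⟨Z, hZ, hZY⟩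
      obtain ⟨Z'', -, -, -, harc⟩ := exists_arc_of_ssub h₁ h₂ hint hY hZ hZY
      exact hleaf _ harc
    have hsing : ∃ a : α, Y = {a} := by
      rcases hY with ⟨v, hv, rfl⟩ | ⟨v, hv, rfl⟩
      · obtain ⟨a, ha1, ha2⟩ := exists_singleton_sub h₁ hv
        refine ⟨a, ?_⟩
        rcases ha2.lt_or_eq with hlt | hE
        · exact absurd ⟨{a}, Or.inl ha1, hlt⟩ hnoZ
        · exact hE.symm
      · obtain ⟨a, ha1, ha2⟩ := exists_singleton_sub h₂ hv
        refine ⟨a, ?_⟩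
        rcases ha2.lt_or_eq with hlt | hE
        · exact absurd ⟨{a}, Or.inr ha1, hlt⟩ hnoZ
        · exact hE.symm
    obtain ⟨a, rfl⟩ := hsing
    refine ⟨a, join_label_eq rfl hY ?_ ?_⟩
    · rintro ⟨Z, ⟨hZC, hZY⟩, -⟩; exact hnoZ ⟨Z, hZC, hZY⟩
    · apply Set.Subset.antisymm
      · intro b hb; exact Set.mem_union_right _ hb
      · rintro b (⟨Z, ⟨hZC, hZY⟩, -⟩ | hb)
        · exact absurd ⟨Z, hZC, hZY⟩ hnoZ
        · exact hb

end

lemma hsmall_left (h₁ : T₁.IsATree)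
    (hsm : ∀ a ∈ T₁.labelSet, ∃ X : Set α,
        SmallestContaining T₁.clusterRep a X ∧ SmallestContaining T₂.clusterRep a X) :
    ∀ (v : V) (a : α), T₁.label v = some a →
      ∀ Z ∈ joinC T₁ T₂, a ∈ Z → T₁.cluster v ⊆ Z := by
  intro v a hla Z hZ haZ
  have hv := h₁.label_mem hla
  obtain ⟨X, hX1, hX2⟩ := hsm a ⟨v, hla⟩
  have hXv : T₁.cluster v = X :=
    Set.Subset.antisymm (cluster_smallest h₁ hla X hX1.1 hX1.2.1)
      (hX1.2.2 _ ⟨v, hv, rfl⟩ (mem_cluster_self hla))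
  rcases hZ with hZ | hZ
  · exact cluster_smallest h₁ hla Z hZ haZ
  · rw [hXv]; exact hX2.2.2 Z hZ haZ

lemma hsmall_right (h₂ : T₂.IsATree) (hl : T₁.labelSet = T₂.labelSet)
    (hsm : ∀ a ∈ T₁.labelSet, ∃ X : Set α,
        SmallestContaining T₁.clusterRep a X ∧ SmallestContaining T₂.clusterRep a X) :
    ∀ (v : W) (a : α), T₂.label v = some a →
      ∀ Z ∈ joinC T₁ T₂, a ∈ Z → T₂.cluster v ⊆ Z := by
  intro v a hla Z hZ haZ
  have hv := h₂.label_mem hla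
  obtain ⟨X, hX1, hX2⟩ := hsm a (by rw [hl]; exact ⟨v, hla⟩)
  have hXv : T₂.cluster v = X :=
    Set.Subset.antisymm (cluster_smallest h₂ hla X hX2.1 hX2.2.1)
      (hX2.2.2 _ ⟨v, hv, rfl⟩ (mem_cluster_self hla))
  rcases hZ with hZ | hZ
  · rw [hXv]; exact hX1.2.2 Z hZ haZ
  · exact cluster_smallest h₂ hla Z hZ haZ

end Aux15

/-- For 𝒜-trees with the same label set whose cluster representations satisfy
condition (iii), the join is an 𝒜-tree and the canonical maps are weak topological
embeddings. -/
theorem stmt15 {α V W : Type} (T₁ : PreTree α V) (T₂ : PreTree α W)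
    (h₁ : T₁.IsATree) (h₂ : T₂.IsATree) (hl : T₁.labelSet = T₂.labelSet)
    (hsm : ∀ a ∈ T₁.labelSet, ∃ X : Set α,
        PreTree.SmallestContaining T₁.clusterRep a X ∧
        PreTree.SmallestContaining T₂.clusterRep a X)
    (hint : ∀ X ∈ T₁.clusterRep, ∀ Y ∈ T₂.clusterRep,
        (X ∩ Y).Nonempty → X ⊆ Y ∨ Y ⊆ X) :
    (PreTree.join T₁ T₂).IsATree ∧
      PreTree.IsWTE T₁ (PreTree.join T₁ T₂) (PreTree.joinMap T₁) ∧
      PreTree.IsWTE T₂ (PreTree.join T₁ T₂) (PreTree.joinMap T₂) := by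
  refine ⟨Aux15.join_isATree h₁ h₂ hint hl, ?_, ?_⟩
  · exact Aux15.wte_aux h₁ h₂ hint h₁ Set.subset_union_left
      (fun Y => le_max_left _ _) (Aux15.hsmall_left h₁ hsm)
  · exact Aux15.wte_aux h₁ h₂ hint h₂ Set.subset_union_right
      (fun Y => le_max_right _ _) (Aux15.hsmall_right h₂ hl hsm)
end

section
/- Let T₁ and T₂ be 𝒜-trees with 𝒜(T₁) = 𝒜(T₂) whose cluster representations satisfy: for every A ∈ 𝒜(T₁), the smallest member of 𝒞_𝒜(T₁) containing A equals the smallest member of 𝒞_𝒜(T₂) containing A; and for every X ∈ 𝒞_𝒜(T₁) and Y ∈ 𝒞_𝒜(T₂), if X ∩ Y ≠ ∅ then X ⊆ Y or Y ⊆ X. Then in the join T_{1,2}: the cluster of every node w_{Y,j} equals Y (i.e., 𝒜_{T_{1,2}}(w_{Y,j}) = Y for all Y ∈ 𝒞 and 1 ≤ j ≤ n_Y), and for every Y ∈ 𝒞 the node w_{Y,1} is the most recent common ancestor in T_{1,2} of the nodes with labels in Y. -/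
namespace Stmt16Aux
open PreTree

variable {α V : Type}

lemma path_antisymm {T : PreTree α V} (h : T.IsATree) {u v : V}
    (huv : T.path u v) (hvu : T.path v u) : u = v := by
  rcases Relation.ReflTransGen.cases_head huv with rfl | ⟨x, hux, hxv⟩
  · rfl
  · exact absurd (Relation.ReflTransGen.trans hxv hvu) (h.acyclic hux)

lemma exists_labeled_descendant {T : PreTree α V} (h : T.IsATree) {v : V}
    (hv : v ∈ T.nodes) : ∃ w a, T.path v w ∧ T.label w = some a := by
  classical
  have hDfin : {w | w ∈ T.nodes ∧ T.path v w}.Finite :=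
    h.finite_nodes.subset (fun w hw => hw.1)
  have hDne : {w | w ∈ T.nodes ∧ T.path v w}.Nonempty :=
    ⟨v, hv, Relation.ReflTransGen.refl⟩
  obtain ⟨w, hwD, hwmin⟩ := Set.exists_min_image _
      (fun w => {u | u ∈ T.nodes ∧ T.path w u}.ncard) hDfin hDne
  have hleaf : ∀ x, ¬ T.arc w x := by
    intro x hax
    have hxD : x ∈ {w | w ∈ T.nodes ∧ T.path v w} :=
      ⟨h.arc_mem_right hax, hwD.2.trans (Relation.ReflTransGen.single hax)⟩
    have hss : {u | u ∈ T.nodes ∧ T.path x u} ⊂ {u | u ∈ T.nodes ∧ T.path w u} := by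
      constructor
      · rintro u ⟨hu, hpu⟩
        exact ⟨hu, (Relation.ReflTransGen.single hax).trans hpu⟩
      · intro hsub
        have hw' : w ∈ {u | u ∈ T.nodes ∧ T.path w u} := ⟨hwD.1, Relation.ReflTransGen.refl⟩
        exact h.acyclic hax (hsub hw').2
    have hlt := Set.ncard_lt_ncard hss (h.finite_nodes.subset fun u hu => hu.1)
    have := hwmin x hxD
    omega
  obtain ⟨a, ha⟩ := h.leaf_labeled w hwD.1 hleaf
  exact ⟨w, a, hwD.2, ha⟩

lemma mem_cluster_iff {T : PreTree α V} (h : T.IsATree) {w : V} {a : α}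
    (hw : T.label w = some a) {v : V} : a ∈ T.cluster v ↔ T.path v w := by
  constructor
  · rintro ⟨u, hpu, hu⟩; rwa [h.label_inj hu hw] at hpu
  · intro hp; exact ⟨w, hp, hw⟩

lemma smallest_eq_cluster {T : PreTree α V} (h : T.IsATree) {w : V} {a : α}
    (hw : T.label w = some a) {X : Set α}
    (hX : PreTree.SmallestContaining T.clusterRep a X) : X = T.cluster w := by
  obtain ⟨⟨v, hv, rfl⟩, haX, hmin⟩ := hX
  have hp : T.path v w := (mem_cluster_iff h hw).1 haX
  have h2 : T.cluster v ⊆ T.cluster w :=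
    hmin _ ⟨w, h.label_mem hw, rfl⟩ ⟨w, Relation.ReflTransGen.refl, hw⟩
  refine Set.Subset.antisymm h2 ?_
  rintro b ⟨u, hpu, hu⟩
  exact ⟨u, hp.trans hpu, hu⟩

lemma cluster_subset_labelSet (T : PreTree α V) (v : V) : T.cluster v ⊆ T.labelSet :=
  fun _ ⟨w, _, hw⟩ => ⟨w, hw⟩

lemma labelSet_finite {T : PreTree α V} (h : T.IsATree) : T.labelSet.Finite := by
  have he : T.labelSet = some ⁻¹' (T.label '' T.nodes) := by
    ext a
    constructor
    · rintro ⟨v, hv⟩; exact ⟨v, h.label_mem hv, hv⟩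
    · rintro ⟨v, _, hlab⟩; exact ⟨v, hlab⟩
  rw [he]
  exact ((h.finite_nodes.image _)).preimage (Option.some_injective α).injOn

lemma clusterRep_finite {T : PreTree α V} (h : T.IsATree) : T.clusterRep.Finite := by
  have he : T.clusterRep = T.cluster '' T.nodes := by
    ext X
    constructor
    · rintro ⟨v, hv, rfl⟩; exact ⟨v, hv, rfl⟩
    · rintro ⟨v, hv, rfl⟩; exact ⟨v, hv, rfl⟩
  rw [he]
  exact h.finite_nodes.image _

lemma mcount_pos {T : PreTree α V} (h : T.IsATree) {Y : Set α}
    (hY : Y ∈ T.clusterRep) : 1 ≤ PreTree.mcount T Y := by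
  obtain ⟨v, hv, rfl⟩ := hY
  have hfin : {u | u ∈ T.nodes ∧ T.cluster u = T.cluster v}.Finite :=
    h.finite_nodes.subset fun u hu => hu.1
  have hne : {u | u ∈ T.nodes ∧ T.cluster u = T.cluster v}.Nonempty := ⟨v, hv, rfl⟩
  exact (Set.ncard_pos hfin).2 hne

end Stmt16Aux
/-- Under condition (iii), in the join `T_{1,2}` the cluster of every node
`w_{Y,j}` equals `Y`, and `w_{Y,1}` is the most recent common ancestor of the nodes with
labels in `Y`. -/
theorem stmt16 {α V W : Type} (T₁ : PreTree α V) (T₂ : PreTree α W)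
    (h₁ : T₁.IsATree) (h₂ : T₂.IsATree) (hl : T₁.labelSet = T₂.labelSet)
    (hsm : ∀ a ∈ T₁.labelSet, ∃ X : Set α,
        PreTree.SmallestContaining T₁.clusterRep a X ∧
        PreTree.SmallestContaining T₂.clusterRep a X)
    (hint : ∀ X ∈ T₁.clusterRep, ∀ Y ∈ T₂.clusterRep,
        (X ∩ Y).Nonempty → X ⊆ Y ∨ Y ⊆ X) :
    (∀ Y ∈ PreTree.joinC T₁ T₂, ∀ j : ℕ, 1 ≤ j → j ≤ PreTree.joinN T₁ T₂ Y →
        (PreTree.join T₁ T₂).cluster (Y, j) = Y) ∧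
    (∀ Y ∈ PreTree.joinC T₁ T₂,
        (∀ a ∈ Y, ∀ p : Set α × ℕ, (PreTree.join T₁ T₂).label p = some a →
            (PreTree.join T₁ T₂).path (Y, 1) p) ∧
        (∀ m : Set α × ℕ,
            (∀ a ∈ Y, ∀ p : Set α × ℕ, (PreTree.join T₁ T₂).label p = some a →
                (PreTree.join T₁ T₂).path m p) →
            (PreTree.join T₁ T₂).path m (Y, 1))) := by
  classical
  open Stmt16Aux in
  -- abbreviations
  have hCfin : (PreTree.joinC T₁ T₂).Finite :=
    (clusterRep_finite h₁).union (clusterRep_finite h₂)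
  have hYfin : ∀ Y ∈ PreTree.joinC T₁ T₂, Y.Finite := by
    rintro Y (⟨v, hv, rfl⟩ | ⟨v, hv, rfl⟩)
    · exact (labelSet_finite h₁).subset (cluster_subset_labelSet T₁ v)
    · exact (labelSet_finite h₂).subset (cluster_subset_labelSet T₂ v)
  have hYne : ∀ Y ∈ PreTree.joinC T₁ T₂, Y.Nonempty := by
    rintro Y (⟨v, hv, rfl⟩ | ⟨v, hv, rfl⟩)
    · obtain ⟨w, a, hp, ha⟩ := exists_labeled_descendant h₁ hv
      exact ⟨a, w, hp, ha⟩
    · obtain ⟨w, a, hp, ha⟩ := exists_labeled_descendant h₂ hv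
      exact ⟨a, w, hp, ha⟩
  have hmemLS : ∀ Y ∈ PreTree.joinC T₁ T₂, ∀ a ∈ Y, a ∈ T₁.labelSet := by
    rintro Y (⟨v, hv, rfl⟩ | ⟨v, hv, rfl⟩) a ha
    · exact cluster_subset_labelSet T₁ v ha
    · rw [hl]; exact cluster_subset_labelSet T₂ v ha
  have hN1 : ∀ Y ∈ PreTree.joinC T₁ T₂, 1 ≤ PreTree.joinN T₁ T₂ Y := by
    rintro Y (hY | hY)
    · exact le_trans (mcount_pos h₁ hY) (le_max_left _ _)
    · exact le_trans (mcount_pos h₂ hY) (le_max_right _ _)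
  -- soundness of labels in the join
  have hsound : ∀ (p : Set α × ℕ) (a : α), (PreTree.join T₁ T₂).label p = some a →
      p.2 = 1 ∧ p.1 ∈ PreTree.joinC T₁ T₂ ∧ a ∈ p.1 ∧
        ∀ Z ∈ PreTree.joinC T₁ T₂, Z ⊂ p.1 → a ∉ Z := by
    intro p a hpa
    simp only [PreTree.join] at hpa
    split at hpa
    case isTrue hcond =>
      obtain rfl : hcond.2.2.choose = a := Option.some.inj hpa
      have hspec := hcond.2.2.choose_spec
      refine ⟨hcond.1, hcond.2.1, ?_, ?_⟩
      · have hmem : hcond.2.2.choose ∈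
            ⋃₀ {Z | Z ∈ PreTree.joinC T₁ T₂ ∧ Z ⊂ p.1} ∪ {hcond.2.2.choose} :=
          Or.inr rfl
        rwa [← hspec.2] at hmem
      · intro Z hZ hZp haZ
        exact hspec.1 ⟨Z, ⟨hZ, hZp⟩, haZ⟩
    case isFalse _ => exact absurd hpa (by simp)
  -- existence of a labeled node for each label occurring in a cluster
  have hXa : ∀ a ∈ T₁.labelSet, ∃ X, X ∈ PreTree.joinC T₁ T₂ ∧ a ∈ X ∧
      (∀ Z ∈ PreTree.joinC T₁ T₂, a ∈ Z → X ⊆ Z) ∧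
      (PreTree.join T₁ T₂).label (X, 1) = some a := by
    intro a haLS
    obtain ⟨X, s1, s2⟩ := hsm a haLS
    have hXC : X ∈ PreTree.joinC T₁ T₂ := Or.inl s1.1
    have haX : a ∈ X := s1.2.1
    have hmin : ∀ Z ∈ PreTree.joinC T₁ T₂, a ∈ Z → X ⊆ Z := by
      rintro Z (hZ | hZ) haZ
      · exact s1.2.2 Z hZ haZ
      · exact s2.2.2 Z hZ haZ
    have hna : a ∉ ⋃₀ {Z | Z ∈ PreTree.joinC T₁ T₂ ∧ Z ⊂ X} := by
      rintro ⟨Z, ⟨hZC, hZX⟩, haZ⟩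
      exact hZX.not_subset (hmin Z hZC haZ)
    obtain ⟨wa, hwa⟩ := haLS
    have hXcl : X = T₁.cluster wa := smallest_eq_cluster h₁ hwa s1
    have hdec : X = ⋃₀ {Z | Z ∈ PreTree.joinC T₁ T₂ ∧ Z ⊂ X} ∪ {a} := by
      apply Set.Subset.antisymm
      · intro b hb
        by_cases hba : b = a
        · exact Or.inr hba
        · left
          have hbLS : b ∈ T₁.labelSet := hmemLS X hXC b hb
          obtain ⟨Xb, t1, t2⟩ := hsm b hbLS
          obtain ⟨wb, hwb⟩ := hbLS
          have hXbcl : Xb = T₁.cluster wb := smallest_eq_cluster h₁ hwb t1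
          have hpab : T₁.path wa wb := by
            rw [hXcl] at hb
            exact (mem_cluster_iff h₁ hwb).1 hb
          have hXbX : Xb ⊆ X := by
            rw [hXbcl, hXcl]
            rintro c ⟨u, hpu, hu⟩
            exact ⟨u, hpab.trans hpu, hu⟩
          have haXb : a ∉ Xb := by
            intro haXb
            rw [hXbcl] at haXb
            have hpba : T₁.path wb wa := (mem_cluster_iff h₁ hwa).1 haXb
            have : wa = wb := path_antisymm h₁ hpab hpba
            rw [this, hwb] at hwa
            exact hba (Option.some.inj hwa)
          refine ⟨Xb, ⟨Or.inl t1.1, hXbX.ssubset_of_ne ?_⟩, t1.2.1⟩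
          intro he
          exact haXb (he ▸ haX)
      · rintro b (⟨Z, ⟨_, hZX⟩, hbZ⟩ | hb)
        · exact hZX.subset hbZ
        · exact hb ▸ haX
    refine ⟨X, hXC, haX, hmin, ?_⟩
    have hcond : True ∧ X ∈ PreTree.joinC T₁ T₂ ∧
        ∃ b : α, b ∉ ⋃₀ {Z | Z ∈ PreTree.joinC T₁ T₂ ∧ Z ⊂ X} ∧
          X = (⋃₀ {Z | Z ∈ PreTree.joinC T₁ T₂ ∧ Z ⊂ X}) ∪ {b} :=
      ⟨trivial, hXC, a, hna, hdec⟩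
    show (PreTree.join T₁ T₂).label (X, 1) = some a
    simp only [PreTree.join]
    rw [dif_pos hcond]
    have hspec := hcond.2.2.choose_spec
    have : a = hcond.2.2.choose := by
      have hmem : a ∈ ⋃₀ {Z | Z ∈ PreTree.joinC T₁ T₂ ∧ Z ⊂ X} ∪ {hcond.2.2.choose} := by
        rw [← hspec.2]; exact haX
      rcases hmem with h | h
      · exact absurd h hna
      · exact h
    rw [← this]
  -- arcs shrink the first component
  have harc_sub : ∀ p q : Set α × ℕ, (PreTree.join T₁ T₂).arc p q → q.1 ⊆ p.1 := by
    intro p q hpq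
    obtain ⟨-, -, (⟨he, -⟩ | ⟨-, hss, -⟩)⟩ := hpq
    · exact he ▸ subset_rfl
    · exact hss.subset
  have hpath_sub : ∀ p q : Set α × ℕ, (PreTree.join T₁ T₂).path p q → q.1 ⊆ p.1 := by
    intro p q hpq
    have hpq' : Relation.ReflTransGen (PreTree.join T₁ T₂).arc p q := hpq
    clear hpq
    induction hpq' with
    | refl => exact subset_rfl
    | tail _ harc ih => exact (harc_sub _ _ harc).trans ih
  -- chains within a fixed cluster
  have hchain : ∀ Y ∈ PreTree.joinC T₁ T₂, ∀ j k : ℕ, 1 ≤ k → k ≤ j →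
      j ≤ PreTree.joinN T₁ T₂ Y → (PreTree.join T₁ T₂).path (Y, j) (Y, k) := by
    intro Y hY j
    induction j with
    | zero => intro k hk hkj _; omega
    | succ n ih =>
      intro k hk hkj hjN
      rcases eq_or_lt_of_le hkj with rfl | hlt
      · exact Relation.ReflTransGen.refl
      · have hkn : k ≤ n := by omega
        have h1n : 1 ≤ n := le_trans hk hkn
        have harc : (PreTree.join T₁ T₂).arc (Y, n + 1) (Y, n) :=
          ⟨hY, hY, Or.inl ⟨rfl, rfl, h1n, hjN⟩⟩
        exact (Relation.ReflTransGen.single harc).trans (ih k hk hkn (by omega))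
  -- descent from a cluster to any subcluster
  have hdescent : ∀ Y ∈ PreTree.joinC T₁ T₂, ∀ X ∈ PreTree.joinC T₁ T₂, X ⊆ Y →
      (PreTree.join T₁ T₂).path (Y, 1) (X, 1) := by
    have key : ∀ n : ℕ, ∀ Y ∈ PreTree.joinC T₁ T₂, Y.ncard ≤ n →
        ∀ X ∈ PreTree.joinC T₁ T₂, X ⊆ Y → (PreTree.join T₁ T₂).path (Y, 1) (X, 1) := by
      intro n
      induction n with
      | zero =>
        intro Y hY hcard X hX hXY
        have := (Set.ncard_pos (hYfin Y hY)).2 (hYne Y hY)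
        omega
      | succ n ih =>
        intro Y hY hcard X hX hXY
        by_cases hXY' : X = Y
        · exact hXY' ▸ Relation.ReflTransGen.refl
        · have hss : X ⊂ Y := hXY.ssubset_of_ne hXY'
          have hSfin : {Z | Z ∈ PreTree.joinC T₁ T₂ ∧ X ⊆ Z ∧ Z ⊂ Y}.Finite :=
            hCfin.subset fun Z hZ => hZ.1
          have hSne : {Z | Z ∈ PreTree.joinC T₁ T₂ ∧ X ⊆ Z ∧ Z ⊂ Y}.Nonempty :=
            ⟨X, hX, subset_rfl, hss⟩
          obtain ⟨Z, hZS, hZmax⟩ : ∃ Z ∈ {Z | Z ∈ PreTree.joinC T₁ T₂ ∧ X ⊆ Z ∧ Z ⊂ Y},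
              ∀ Z' ∈ {Z | Z ∈ PreTree.joinC T₁ T₂ ∧ X ⊆ Z ∧ Z ⊂ Y}, id Z ≤ id Z' → id Z = id Z' := by
            obtain ⟨Z, hZ⟩ := hSfin.exists_maximal hSne
            exact ⟨Z, hZ.1, fun Z' hZ' hle => hZ.eq_of_le hZ' hle⟩
          have harc : (PreTree.join T₁ T₂).arc (Y, 1) (Z, PreTree.joinN T₁ T₂ Z) := by
            refine ⟨hY, hZS.1, Or.inr ⟨rfl, hZS.2.2, rfl, hN1 Z hZS.1, ?_⟩⟩
            rintro ⟨Z', hZ'C, hZZ', hZ'Y⟩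
            have hZ'S : Z' ∈ {Z | Z ∈ PreTree.joinC T₁ T₂ ∧ X ⊆ Z ∧ Z ⊂ Y} :=
              ⟨hZ'C, hZS.2.1.trans hZZ'.subset, hZ'Y⟩
            exact hZZ'.ne (hZmax Z' hZ'S hZZ'.subset)
          have hZcard : Z.ncard ≤ n := by
            have hlt := Set.ncard_lt_ncard hZS.2.2 (hYfin Y hY)
            omega
          exact ((Relation.ReflTransGen.single harc).trans
            (hchain Z hZS.1 (PreTree.joinN T₁ T₂ Z) 1 le_rfl (hN1 Z hZS.1) le_rfl)).trans
            (ih Z hZS.1 hZcard X hX hZS.2.1)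
    intro Y hY X hX hXY
    exact key Y.ncard Y hY le_rfl X hX hXY
  -- any source of an arc is a genuine node
  have hnode : ∀ p q : Set α × ℕ, (PreTree.join T₁ T₂).arc p q →
      p.1 ∈ PreTree.joinC T₁ T₂ ∧ 1 ≤ p.2 ∧ p.2 ≤ PreTree.joinN T₁ T₂ p.1 := by
    intro p q hpq
    obtain ⟨h1, -, (⟨-, he, hq1, hN⟩ | ⟨he, -⟩)⟩ := hpq
    · exact ⟨h1, by omega, hN⟩
    · exact ⟨h1, by omega, he ▸ hN1 p.1 h1⟩
  constructor
  · -- clusters of join nodes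
    intro Y hY j hj1 hjN
    ext a
    constructor
    · rintro ⟨p, hpath, hlab⟩
      exact hpath_sub _ _ hpath (hsound p a hlab).2.2.1
    · intro ha
      obtain ⟨X, hXC, haX, hmin, hlab⟩ := hXa a (hmemLS Y hY a ha)
      exact ⟨(X, 1), (hchain Y hY j 1 le_rfl hj1 hjN).trans
        (hdescent Y hY X hXC (hmin Y hY ha)), hlab⟩
  · intro Y hY
    constructor
    · -- (Y,1) is above every node labeled by an element of Y
      rintro a ha ⟨P, i⟩ hp
      obtain ⟨hi1, hPC, haP, hmax⟩ := hsound (P, i) a hp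
      obtain ⟨X, hXC, haX, hmin, -⟩ := hXa a (hmemLS Y hY a ha)
      have hXP : X ⊆ P := hmin P hPC haP
      have hPX : P = X := by
        by_contra hne
        exact hmax X hXC (hXP.ssubset_of_ne fun he => hne he.symm) haX
      obtain rfl : i = 1 := hi1
      rw [hPX]
      exact hdescent Y hY X hXC (hmin Y hY ha)
    · -- (Y,1) is below every common ancestor
      rintro ⟨M, i⟩ hm
      obtain ⟨a₀, ha₀⟩ := hYne Y hY
      obtain ⟨X₀, hX₀C, ha₀X₀, hmin₀, hlab₀⟩ := hXa a₀ (hmemLS Y hY a₀ ha₀)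
      have hYM : Y ⊆ M := by
        intro a ha
        obtain ⟨X, hXC, haX, hmin, hlab⟩ := hXa a (hmemLS Y hY a ha)
        exact hpath_sub _ _ (hm a ha (X, 1) hlab) haX
      have hm₀ : (PreTree.join T₁ T₂).path (M, i) (X₀, 1) := hm a₀ ha₀ (X₀, 1) hlab₀
      rcases Relation.ReflTransGen.cases_head hm₀ with heq | ⟨q, harc, -⟩
      · injection heq with hM hi
        have hYM' : Y = M := Set.Subset.antisymm hYM (by rw [hM]; exact hmin₀ Y hY ha₀)
        rw [show M = Y from hYM'.symm, hi]
        exact Relation.ReflTransGen.refl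
      · obtain ⟨hMC, hi1, hiN⟩ := hnode (M, i) q harc
        exact (hchain M hMC i 1 le_rfl hi1 hiN).trans (hdescent M hMC Y hY hYM)
end
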